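/- arXiv:math/9606227 — 5 statements merged into one kernel-verified Lean document; each statement's English description precedes it below -/
import Mathlib

section
/- Let λ be a nonempty index set and κ a cardinal. If there exists a family of κ dense open subsets of P_λ whose intersection is not dense in P_λ, then there exists a family of κ dense open subsets of P_λ whose intersection is empty. -/
open Set

/-- A condition in the full product `(P(ω)/fin)^ι`: a function assigning an
infinite subset of `ℕ` to every index. -/
def PCond (ι : Type*) : Type _ :=
  {p : ι → Set ℕ // ∀ α, (p α).Infinite}

/-- `q ≤ p` iff `q α` is almost contained in `p α` (i.e. `q α \ p α` is finite)
for every index `α`. -/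
instance (ι : Type*) : Preorder (PCond ι) where
  le q p := ∀ α, ((q.1 α) \ (p.1 α)).Finite
  le_refl p := fun α => by simp
  le_trans a b c hab hbc := fun α =>
    ((hab α).union (hbc α)).subset (fun x hx => by
      by_cases hb : x ∈ b.1 α
      · exact Or.inr ⟨hb, hx.2⟩
      · exact Or.inl ⟨hx.1, hb⟩)

/-- A set of conditions is open iff it is downward closed. -/
def OpenIn {P : Type*} [Preorder P] (D : Set P) : Prop :=
  ∀ p ∈ D, ∀ q, q ≤ p → q ∈ D

/-- A set of conditions is dense iff every condition has an extension in it. -/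
def DenseIn {P : Type*} [Preorder P] (D : Set P) : Prop :=
  ∀ p, ∃ q ∈ D, q ≤ p

/-- If there is a family of `κ` dense open subsets of `P_λ` whose intersection is
not dense, then there is such a family whose intersection is empty. -/
theorem exists_family_empty_inter {ι : Type} [Nonempty ι] (κ : Cardinal)
    (h : ∃ (I : Type) (D : I → Set (PCond ι)),
      Cardinal.mk I = κ ∧ (∀ a, OpenIn (D a) ∧ DenseIn (D a)) ∧
        ¬ DenseIn (⋂ a, D a)) :
    ∃ (I : Type) (D : I → Set (PCond ι)),
      Cardinal.mk I = κ ∧ (∀ a, OpenIn (D a) ∧ DenseIn (D a)) ∧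
        (⋂ a, D a) = ∅ := by
  obtain ⟨I, D, hI, hDO, hnd⟩ := h
  rw [DenseIn] at hnd
  push_neg at hnd
  obtain ⟨p, hp⟩ := hnd
  -- for each α, a bijection ℕ ≃ p.1 α
  have hden : ∀ α, Nonempty (ℕ ≃ (p.1 α : Set ℕ)) := fun α => by
    haveI : Infinite (p.1 α : Set ℕ) := (p.2 α).to_subtype
    exact nonempty_equiv_of_countable
  let f : ι → ℕ → ℕ := fun α n => ((hden α).some n : ℕ)
  have hfinj : ∀ α, Function.Injective (f α) := fun α =>
    Subtype.val_injective.comp (hden α).some.injective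
  have hfrange : ∀ α, Set.range (f α) = p.1 α := by
    intro α
    have : Set.range (f α) = Subtype.val '' Set.range (hden α).some := by
      rw [← Set.range_comp]; rfl
    rw [this, Equiv.range_eq_univ]
    simp
  -- the transfer map
  let F : PCond ι → PCond ι := fun q =>
    ⟨fun α => f α '' q.1 α, fun α => (q.2 α).image ((hfinj α).injOn)⟩
  have hFmono : ∀ q r : PCond ι, q ≤ r → F q ≤ F r := by
    intro q r hqr α
    have : (F q).1 α \ (F r).1 α = f α '' (q.1 α \ r.1 α) := by
      rw [Set.image_diff (hfinj α)]
    rw [this]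
    exact (hqr α).image _
  refine ⟨I, fun a => F ⁻¹' (D a), hI, ?_, ?_⟩
  · intro a
    constructor
    · -- open
      intro q hq r hrq
      exact (hDO a).1 (F q) hq (F r) (hFmono r q hrq)
    · -- dense
      intro q
      obtain ⟨r, hr, hrq⟩ := (hDO a).2 (F q)
      -- shrink r into the range of f
      have hint : ∀ α, (r.1 α ∩ f α '' q.1 α).Infinite := by
        intro α
        have h1 : r.1 α ⊆ (r.1 α \ f α '' q.1 α) ∪ (r.1 α ∩ f α '' q.1 α) := by
          intro x hx
          by_cases hx' : x ∈ f α '' q.1 α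
          · exact Or.inr ⟨hx, hx'⟩
          · exact Or.inl ⟨hx, hx'⟩
        by_contra hfin
        rw [Set.not_infinite] at hfin
        exact (r.2 α) (((hrq α).union hfin).subset h1)
      have hsubr : ∀ α, r.1 α ∩ f α '' q.1 α ⊆ Set.range (f α) := fun α x hx => by
        obtain ⟨y, _, hy⟩ := hx.2; exact ⟨y, hy⟩
      let s : PCond ι := ⟨fun α => f α ⁻¹' (r.1 α ∩ f α '' q.1 α),
        fun α => (hint α).preimage (hsubr α)⟩
      have hFs : ∀ α, (F s).1 α = r.1 α ∩ f α '' q.1 α := by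
        intro α
        show f α '' (f α ⁻¹' (r.1 α ∩ f α '' q.1 α)) = _
        rw [Set.image_preimage_eq_inter_range, Set.inter_eq_self_of_subset_left (hsubr α)]
      have hFsr : F s ≤ r := by
        intro α
        rw [hFs α]
        exact Set.Finite.subset (Set.finite_empty) (by intro x hx; exact hx.2 hx.1.1)
      refine ⟨s, (hDO a).1 r hr (F s) hFsr, ?_⟩
      intro α
      have : s.1 α \ q.1 α = ∅ := by
        ext x
        simp only [Set.mem_diff, Set.mem_empty_iff_false, iff_false, not_and, not_not]
        rintro ⟨-, y, hy, hyx⟩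
        rwa [← hfinj α hyx]
      rw [this]; exact Set.finite_empty
  · -- empty intersection
    rw [Set.eq_empty_iff_forall_notMem]
    intro q hq
    have hq' : F q ∈ ⋂ a, D a := by
      rw [Set.mem_iInter] at hq ⊢
      exact fun a => hq a
    have hle : F q ≤ p := by
      intro α
      have : (F q).1 α ⊆ p.1 α := by
        rw [← hfrange α]
        rintro x ⟨y, -, hy⟩; exact ⟨y, hy⟩
      refine Set.Finite.subset Set.finite_empty ?_
      intro x hx; exact (hx.2 (this hx.1)).elim
    exact hp (F q) hq' hle
end

section
/- Let λ be a nonempty index set and κ a cardinal. If player II has a winning strategy in the game G(P_λ, κ), then there exists a family of at most κ maximal antichains of P_λ which has no common refinement, i.e. no maximal antichain of P_λ refines every member of the family. -/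
open Set

/-- A strategy for player II in the game `G(P, κ)`.  `move β pI pII` is II's reply
at stage `β`, given player I's moves `pI γ` for `γ ≤ β` and II's own earlier moves
`pII γ` for `γ < β`; the field `depends_only_on_past` states that the reply only
depends on this part of the position. -/
structure IIStrategy (P : Type*) where
  move : Ordinal.{0} → (Ordinal.{0} → P) → (Ordinal.{0} → P) → P
  depends_only_on_past : ∀ (β : Ordinal.{0}) (pI pII pI' pII' : Ordinal.{0} → P),
    (∀ γ ≤ β, pI γ = pI' γ) → (∀ γ < β, pII γ = pII' γ) →
    move β pI pII = move β pI' pII'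

/-- `pI, pII` describe a legal position of the game before stage `β` in which
player II has followed `σ`: at every earlier stage `γ < β`, player I's move
`pI γ` extends all previous moves, player II's move `pII γ` extends `pI γ`,
and `pII γ` is the move dictated by `σ`. -/
def IsPosition {P : Type*} [Preorder P] (σ : IIStrategy P) (β : Ordinal)
    (pI pII : Ordinal → P) : Prop :=
  ∀ γ < β, (∀ δ < γ, pI γ ≤ pII δ) ∧ pII γ ≤ pI γ ∧ pII γ = σ.move γ pI pII

/-- `pI, pII` is a complete legal run of the game of length `κ` in which player II
follows the strategy `σ`. -/
def IsRun {P : Type*} [Preorder P] (κ : Ordinal) (σ : IIStrategy P)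
    (pI pII : Ordinal → P) : Prop :=
  ∀ β < κ, (∀ γ < β, pI β ≤ pII γ) ∧ pII β ≤ pI β ∧ pII β = σ.move β pI pII

/-- The strategy `σ` replies legally at every reachable position of the game of
length `κ`. -/
def LegalStrategy {P : Type*} [Preorder P] (κ : Ordinal) (σ : IIStrategy P) : Prop :=
  ∀ β < κ, ∀ pI pII : Ordinal → P, IsPosition σ β pI pII →
    (∀ γ < β, pI β ≤ pII γ) → σ.move β pI pII ≤ pI β

/-- `σ` is a winning strategy for player II in the game `G(P, κ)`: it always
replies legally, and every complete legal run of length `κ` in which II follows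
`σ` produces a sequence of moves with no lower bound. -/
def WinningForII {P : Type*} [Preorder P] (κ : Ordinal) (σ : IIStrategy P) : Prop :=
  LegalStrategy κ σ ∧
    ∀ pI pII : Ordinal → P, IsRun κ σ pI pII → ¬ ∃ q : P, ∀ β < κ, q ≤ pII β

/-- Two conditions are compatible iff they have a common extension. -/
def Compat {P : Type*} [Preorder P] (p q : P) : Prop :=
  ∃ r, r ≤ p ∧ r ≤ q

/-- A maximal antichain: a set of pairwise incompatible conditions such that
every condition is compatible with some member. -/
def MaxAntichain {P : Type*} [Preorder P] (A : Set P) : Prop :=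
  (∀ p ∈ A, ∀ q ∈ A, p ≠ q → ¬ Compat p q) ∧ ∀ p, ∃ a ∈ A, Compat p a

/-- `B` refines `A` iff every member of `B` extends some member of `A`. -/
def RefinesAC {P : Type*} [Preorder P] (B A : Set P) : Prop :=
  ∀ b ∈ B, ∃ a ∈ A, b ≤ a

set_option linter.unusedSectionVars false

section Aux

variable {P : Type} [Preorder P]

lemma compat_self (p : P) : Compat p p := ⟨p, le_refl p, le_refl p⟩

lemma maxac_eq_of_le {A : Set P} (hA : MaxAntichain A) {b c c' : P}
    (hc : c ∈ A) (hc' : c' ∈ A) (h1 : b ≤ c) (h2 : b ≤ c') : c = c' := by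
  by_contra hne
  exact hA.1 c hc c' hc' hne ⟨b, h1, h2⟩

lemma move_congr (σ : IIStrategy P) {β : Ordinal} {pI pII pI' pII' : Ordinal → P}
    (hI : ∀ γ ≤ β, pI γ = pI' γ) (hII : ∀ γ < β, pII γ = pII' γ) :
    σ.move β pI pII = σ.move β pI' pII' :=
  σ.depends_only_on_past β pI pII pI' pII' hI hII

lemma isPosition_congr (σ : IIStrategy P) {β : Ordinal} {pI pII pI' pII' : Ordinal → P}
    (h : IsPosition σ β pI pII)
    (hI : ∀ γ < β, pI γ = pI' γ) (hII : ∀ γ < β, pII γ = pII' γ) :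
    IsPosition σ β pI' pII' := by
  intro γ hγ
  obtain ⟨h1, h2, h3⟩ := h γ hγ
  refine ⟨fun δ hδ => ?_, ?_, ?_⟩
  · rw [← hI γ hγ, ← hII δ (hδ.trans hγ)]; exact h1 δ hδ
  · rw [← hI γ hγ, ← hII γ hγ]; exact h2
  · rw [← hII γ hγ, h3]
    exact move_congr σ (fun δ hδ => hI δ (lt_of_le_of_lt hδ hγ))
      (fun δ hδ => hII δ (hδ.trans hγ))

lemma exists_maxac_below (a : P) (D : Set P)
    (hD : ∀ p, p ≤ a → ∃ q ∈ D, q ≤ p ∧ q ≤ a) :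
    ∃ C, C ⊆ D ∧ (∀ c ∈ C, c ≤ a) ∧ (∀ p ∈ C, ∀ q ∈ C, p ≠ q → ¬ Compat p q) ∧
      ∀ p, p ≤ a → ∃ c ∈ C, Compat p c := by
  obtain ⟨M, hM⟩ := zorn_subset
    {C : Set P | C ⊆ D ∧ (∀ c ∈ C, c ≤ a) ∧ ∀ p ∈ C, ∀ q ∈ C, p ≠ q → ¬ Compat p q}
    (fun c hc hchain => ⟨⋃₀ c, ⟨fun x ⟨s, hs, hxs⟩ => (hc hs).1 hxs,
      fun x ⟨s, hs, hxs⟩ => (hc hs).2.1 x hxs,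
      fun p ⟨s, hs, hps⟩ q ⟨t, ht, hqt⟩ hne => by
        rcases hchain.total hs ht with hst | hts
        · exact (hc ht).2.2 p (hst hps) q hqt hne
        · exact (hc hs).2.2 p hps q (hts hqt) hne⟩,
      fun s hs _ hxs => ⟨s, hs, hxs⟩⟩)
  obtain ⟨⟨hMD, hMa, hManti⟩, hMmax⟩ := hM
  refine ⟨M, hMD, hMa, hManti, fun p hp => ?_⟩
  by_contra hno
  push_neg at hno
  obtain ⟨q, hqD, hqp, hqa⟩ := hD p hp
  have hqM : ∀ m ∈ M, ¬ Compat q m := by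
    intro m hm ⟨r, hrq, hrm⟩
    exact hno m hm ⟨r, hrq.trans hqp, hrm⟩
  have hqnotM : q ∉ M := fun hq => hqM q hq (compat_self q)
  have hins : insert q M ∈
      {C : Set P | C ⊆ D ∧ (∀ c ∈ C, c ≤ a) ∧ ∀ p ∈ C, ∀ q ∈ C, p ≠ q → ¬ Compat p q} := by
    refine ⟨?_, ?_, ?_⟩
    · intro x hx; rcases hx with rfl | hx
      · exact hqD
      · exact hMD hx
    · intro x hx; rcases hx with rfl | hx
      · exact hqa
      · exact hMa x hx
    · intro x hx y hy hne
      rcases hx with rfl | hx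
      · rcases hy with rfl | hy
        · exact absurd rfl hne
        · exact hqM y hy
      · rcases hy with rfl | hy
        · intro ⟨r, hrx, hry⟩; exact hqM x hx ⟨r, hry, hrx⟩
        · exact hManti x hx y hy hne
  have := hMmax hins (Set.subset_insert q M)
  exact hqnotM (this (Set.mem_insert q M))

/-- The data constructed at each stage: a (maximal) antichain together with,
for each of its elements, a position of the game. -/
structure StageData (P : Type) where
  A : Set P
  g : P → (Ordinal → P) × (Ordinal → P)

noncomputable instance StageData.instNonempty [Nonempty P] : Nonempty (StageData P) :=
  ⟨⟨∅, fun _ => (fun _ => Classical.arbitrary P, fun _ => Classical.arbitrary P)⟩⟩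

/-- The invariants of the construction at stage `β`. -/
def GoodAt (σ : IIStrategy P) (β : Ordinal) (prev : Ordinal → StageData P)
    (d : StageData P) : Prop :=
  MaxAntichain d.A ∧
  (∀ a ∈ d.A, IsPosition σ β (d.g a).1 (d.g a).2 ∧ ∀ γ, γ < β → a ≤ (d.g a).2 γ) ∧
  (∀ γ, γ < β → ∀ a ∈ d.A, ∃ c ∈ (prev γ).A, a ≤ c ∧
     ∀ δ, δ < γ → (d.g a).1 δ = ((prev γ).g c).1 δ ∧ (d.g a).2 δ = ((prev γ).g c).2 δ)

lemma goodAt_congr {σ : IIStrategy P} {β : Ordinal} {d : StageData P}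
    {prev prev' : Ordinal → StageData P} (h : ∀ γ, γ < β → prev γ = prev' γ) :
    GoodAt σ β prev d → GoodAt σ β prev' d := by
  rintro ⟨h1, h2, h3⟩
  exact ⟨h1, h2, fun γ hγ a ha => (h γ hγ) ▸ h3 γ hγ a ha⟩

open Classical in
/-- The stages, built by transfinite recursion with choice. -/
noncomputable def sys [Nonempty P] (σ : IIStrategy P) (β : Ordinal) : StageData P :=
  if h : ∃ d, GoodAt σ β
      (fun γ => if hγ : γ < β then sys σ γ else Classical.arbitrary _) d
  then h.choose else Classical.arbitrary _
termination_by β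
decreasing_by all_goals exact hγ

lemma good_of_exists [Nonempty P] {σ : IIStrategy P} {β : Ordinal}
    (h : ∃ d, GoodAt σ β (sys σ) d) : GoodAt σ β (sys σ) (sys σ β) := by
  have h' : ∃ d, GoodAt σ β
      (fun γ => if hγ : γ < β then sys σ γ else Classical.arbitrary _) d := by
    obtain ⟨d, hd⟩ := h
    exact ⟨d, goodAt_congr (fun γ hγ => by simp [hγ]) hd⟩
  have : sys σ β = h'.choose := by rw [sys, dif_pos h']
  rw [this]
  exact goodAt_congr (fun γ hγ => by simp [hγ]) h'.choose_spec

end Aux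

section MainSec

variable {P : Type} [Preorder P] [Nonempty P]

lemma exists_succ (σ : IIStrategy P) {k γ : Ordinal} (hleg : LegalStrategy k σ)
    (hγk : γ < k) (hG : GoodAt σ γ (sys σ) (sys σ γ)) :
    ∃ d, GoodAt σ (γ + 1) (sys σ) d := by
  classical
  obtain ⟨hmax, hpos, hcoh⟩ := hG
  set s := sys σ γ with hs
  -- the set of replies of σ to legal moves of player I below `a`
  have hreply : ∀ a ∈ s.A, ∀ p, p ≤ a →
      σ.move γ (Function.update (s.g a).1 γ p) (s.g a).2 ≤ p := by
    intro a ha p hp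
    have hpos' : IsPosition σ γ (Function.update (s.g a).1 γ p) (s.g a).2 :=
      isPosition_congr σ (hpos a ha).1
        (fun δ hδ => (Function.update_of_ne (ne_of_lt hδ) _ _).symm) (fun _ _ => rfl)
    have := hleg γ hγk _ _ hpos' (fun δ hδ => by
      rw [Function.update_self]; exact hp.trans ((hpos a ha).2 δ hδ))
    rwa [Function.update_self] at this
  have hdense : ∀ a ∈ s.A, ∀ p, p ≤ a → ∃ q ∈ {q | ∃ p', p' ≤ a ∧ q ≤ p' ∧
      q = σ.move γ (Function.update (s.g a).1 γ p') (s.g a).2}, q ≤ p ∧ q ≤ a := by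
    intro a ha p hp
    exact ⟨σ.move γ (Function.update (s.g a).1 γ p) (s.g a).2,
      ⟨p, hp, hreply a ha p hp, rfl⟩, hreply a ha p hp, (hreply a ha p hp).trans hp⟩
  have hCex : ∀ a : P, ∃ C : Set P, a ∈ s.A →
      (∀ q ∈ C, ∃ p', p' ≤ a ∧ q ≤ p' ∧
        q = σ.move γ (Function.update (s.g a).1 γ p') (s.g a).2) ∧
      (∀ c ∈ C, c ≤ a) ∧ (∀ p ∈ C, ∀ q ∈ C, p ≠ q → ¬ Compat p q) ∧
        ∀ p, p ≤ a → ∃ c ∈ C, Compat p c := by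
    intro a
    by_cases ha : a ∈ s.A
    · obtain ⟨C, hC1, hC2⟩ := exists_maxac_below a _ (hdense a ha)
      exact ⟨C, fun _ => ⟨fun q hq => hC1 hq, hC2⟩⟩
    · exact ⟨∅, fun h => absurd h ha⟩
  choose C hC using hCex
  have haex : ∀ q : P, ∃ a, (∃ a' ∈ s.A, q ∈ C a') → (a ∈ s.A ∧ q ∈ C a) := by
    intro q
    by_cases h : ∃ a' ∈ s.A, q ∈ C a'
    · obtain ⟨a, ha, hq⟩ := h
      exact ⟨a, fun _ => ⟨ha, hq⟩⟩
    · exact ⟨Classical.arbitrary P, fun h' => absurd h' h⟩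
  choose aof haof using haex
  have hpex : ∀ q : P, ∃ p, (∃ a' ∈ s.A, q ∈ C a') →
      (p ≤ aof q ∧ q ≤ p ∧
        q = σ.move γ (Function.update (s.g (aof q)).1 γ p) (s.g (aof q)).2) := by
    intro q
    by_cases h : ∃ a' ∈ s.A, q ∈ C a'
    · obtain ⟨hmem, hqC⟩ := haof q h
      obtain ⟨p, hp⟩ := (hC (aof q) hmem).1 q hqC
      exact ⟨p, fun _ => hp⟩
    · exact ⟨Classical.arbitrary P, fun h' => absurd h' h⟩
  choose pof hpof using hpex
  refine ⟨⟨{q | ∃ a' ∈ s.A, q ∈ C a'}, fun q =>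
    (Function.update (s.g (aof q)).1 γ (pof q), Function.update (s.g (aof q)).2 γ q)⟩,
    ⟨?_, ?_⟩, ?_, ?_⟩
  · -- pairwise incompatible
    rintro q ⟨a, ha, hqa⟩ q' ⟨a', ha', hqa'⟩ hne
    by_cases haa : a = a'
    · subst haa; exact (hC a ha).2.2.1 q hqa q' hqa' hne
    · rintro ⟨r, hr, hr'⟩
      exact hmax.1 a ha a' ha' haa ⟨r, hr.trans ((hC a ha).2.1 q hqa),
        hr'.trans ((hC a' ha').2.1 q' hqa')⟩
  · -- maximal
    intro p
    obtain ⟨a, ha, r, hrp, hra⟩ := hmax.2 p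
    obtain ⟨c, hc, t, htr, htc⟩ := (hC a ha).2.2.2 r hra
    exact ⟨c, ⟨a, ha, hc⟩, t, htr.trans hrp, htc⟩
  · -- positions
    rintro q hq
    obtain ⟨haA, hqCa⟩ := haof q hq
    obtain ⟨hpa, hqp, hqmove⟩ := hpof q hq
    obtain ⟨hposa, hinva⟩ := hpos (aof q) haA
    simp only
    constructor
    · -- IsPosition at γ+1
      intro δ hδ
      have hδle : δ ≤ γ := by
        rw [Ordinal.add_one_eq_succ, Order.lt_succ_iff] at hδ; exact hδ
      rcases lt_or_eq_of_le hδle with hδγ | rfl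
      · obtain ⟨h1, h2, h3⟩ := hposa δ hδγ
        refine ⟨fun δ' hδ' => ?_, ?_, ?_⟩
        · rw [Function.update_of_ne (ne_of_lt hδγ), Function.update_of_ne
            (ne_of_lt (hδ'.trans hδγ))]
          exact h1 δ' hδ'
        · rw [Function.update_of_ne (ne_of_lt hδγ), Function.update_of_ne (ne_of_lt hδγ)]
          exact h2
        · rw [Function.update_of_ne (ne_of_lt hδγ), h3]
          exact move_congr σ
            (fun δ' hδ' => (Function.update_of_ne (ne_of_lt (lt_of_le_of_lt hδ' hδγ)) _ _).symm)
            (fun δ' hδ' => (Function.update_of_ne (ne_of_lt (hδ'.trans hδγ)) _ _).symm)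
      · refine ⟨fun δ' hδ' => ?_, ?_, ?_⟩
        · rw [Function.update_self, Function.update_of_ne (ne_of_lt hδ')]
          exact hpa.trans (hinva δ' hδ')
        · rw [Function.update_self, Function.update_self]; exact hqp
        · rw [Function.update_self]
          exact hqmove.trans (move_congr σ (fun δ' _ => rfl)
            (fun δ' hδ' => (Function.update_of_ne (ne_of_lt hδ') _ _).symm))
    · -- q is below all of II's moves
      intro δ hδ
      have hδle : δ ≤ γ := by
        rw [Ordinal.add_one_eq_succ, Order.lt_succ_iff] at hδ; exact hδ
      rcases lt_or_eq_of_le hδle with hδγ | rfl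
      · rw [Function.update_of_ne (ne_of_lt hδγ)]
        exact (hqp.trans hpa).trans (hinva δ hδγ)
      · rw [Function.update_self]
  · -- coherence
    rintro δ hδ q hq
    obtain ⟨haA, hqCa⟩ := haof q hq
    obtain ⟨hpa, hqp, hqmove⟩ := hpof q hq
    have hqa : q ≤ aof q := hqp.trans hpa
    have hδle : δ ≤ γ := by
      rw [Ordinal.add_one_eq_succ, Order.lt_succ_iff] at hδ; exact hδ
    rcases lt_or_eq_of_le hδle with hδγ | rfl
    · obtain ⟨c, hc, hac, hagree⟩ := hcoh δ hδγ (aof q) haA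
      refine ⟨c, hc, hqa.trans hac, fun δ' hδ' => ?_⟩
      simp only
      rw [Function.update_of_ne (ne_of_lt (hδ'.trans hδγ)),
        Function.update_of_ne (ne_of_lt (hδ'.trans hδγ))]
      exact hagree δ' hδ'
    · refine ⟨aof q, haA, hqa, fun δ' hδ' => ?_⟩
      simp only
      rw [Function.update_of_ne (ne_of_lt hδ'), Function.update_of_ne (ne_of_lt hδ')]
      exact ⟨rfl, rfl⟩

end MainSec

section LimitSec

variable {P : Type} [Preorder P] [Nonempty P]

open Classical in
/-- The unique element of the stage-`γ` antichain lying above `b` (when it exists). -/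
noncomputable def thr (σ : IIStrategy P) (b : P) (γ : Ordinal) : P :=
  if h : ∃ c ∈ (sys σ γ).A, b ≤ c then h.choose else b

lemma thr_spec {σ : IIStrategy P} {b : P} {γ : Ordinal}
    (h : ∃ c ∈ (sys σ γ).A, b ≤ c) : thr σ b γ ∈ (sys σ γ).A ∧ b ≤ thr σ b γ := by
  rw [thr, dif_pos h]; exact h.choose_spec

/-- Player I's moves along the thread of `b`. -/
noncomputable def runI (σ : IIStrategy P) (b : P) (δ : Ordinal) : P :=
  ((sys σ (δ + 1)).g (thr σ b (δ + 1))).1 δ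

/-- Player II's moves along the thread of `b`. -/
noncomputable def runII (σ : IIStrategy P) (b : P) (δ : Ordinal) : P :=
  ((sys σ (δ + 1)).g (thr σ b (δ + 1))).2 δ

lemma lt_self_add_one (δ : Ordinal) : δ < δ + 1 := by
  rw [Ordinal.add_one_eq_succ]; exact Order.lt_succ δ

lemma agree {σ : IIStrategy P} {γ' : Ordinal}
    (hG : ∀ γ'' ≤ γ', GoodAt σ γ'' (sys σ) (sys σ γ''))
    {b c : P} (hc : c ∈ (sys σ γ').A) (hbc : b ≤ c) {δ : Ordinal} (hδ : δ < γ') :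
    thr σ b (δ + 1) ∈ (sys σ (δ + 1)).A ∧ b ≤ thr σ b (δ + 1) ∧
    ((sys σ γ').g c).1 δ = runI σ b δ ∧ ((sys σ γ').g c).2 δ = runII σ b δ := by
  have hsucc : δ + 1 ≤ γ' := by rw [Ordinal.add_one_eq_succ, Order.succ_le_iff]; exact hδ
  rcases lt_or_eq_of_le hsucc with hlt | heq
  · obtain ⟨c', hc', hcc', hagree⟩ := (hG γ' le_rfl).2.2 (δ + 1) hlt c hc
    have hex : ∃ x ∈ (sys σ (δ + 1)).A, b ≤ x := ⟨c', hc', hbc.trans hcc'⟩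
    obtain ⟨ht1, ht2⟩ := thr_spec hex
    have hthr : thr σ b (δ + 1) = c' :=
      maxac_eq_of_le (hG (δ + 1) hsucc).1 ht1 hc' ht2 (hbc.trans hcc')
    refine ⟨ht1, ht2, ?_, ?_⟩
    · rw [runI, hthr]; exact (hagree δ (lt_self_add_one δ)).1
    · rw [runII, hthr]; exact (hagree δ (lt_self_add_one δ)).2
  · subst heq
    have hex : ∃ x ∈ (sys σ (δ + 1)).A, b ≤ x := ⟨c, hc, hbc⟩
    obtain ⟨ht1, ht2⟩ := thr_spec hex
    have hthr : thr σ b (δ + 1) = c :=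
      maxac_eq_of_le (hG (δ + 1) le_rfl).1 ht1 hc ht2 hbc
    exact ⟨ht1, ht2, by rw [runI, hthr], by rw [runII, hthr]⟩

lemma exists_nonsucc (σ : IIStrategy P) {β : Ordinal} (hns : ∀ γ, β ≠ γ + 1)
    (hG : ∀ γ < β, GoodAt σ γ (sys σ) (sys σ γ))
    {B : Set P} (hBm : MaxAntichain B) (hBr : ∀ γ < β, RefinesAC B ((sys σ γ).A)) :
    ∃ d, GoodAt σ β (sys σ) d := by
  have hsucclt : ∀ γ < β, γ + 1 < β := fun γ hγ =>
    lt_of_le_of_ne (by rw [Ordinal.add_one_eq_succ, Order.succ_le_iff]; exact hγ)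
      (fun h => hns γ h.symm)
  have key : ∀ b ∈ B, ∀ γ < β, thr σ b (γ + 1) ∈ (sys σ (γ + 1)).A ∧ b ≤ thr σ b (γ + 1) ∧
      ∀ δ < γ + 1, ((sys σ (γ + 1)).g (thr σ b (γ + 1))).1 δ = runI σ b δ ∧
        ((sys σ (γ + 1)).g (thr σ b (γ + 1))).2 δ = runII σ b δ := by
    intro b hb γ hγ
    have hγ1 := hsucclt γ hγ
    obtain ⟨c₀, hc₀, hbc₀⟩ := hBr (γ + 1) hγ1 b hb
    have hex : ∃ c ∈ (sys σ (γ + 1)).A, b ≤ c := ⟨c₀, hc₀, hbc₀⟩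
    obtain ⟨ht1, ht2⟩ := thr_spec hex
    refine ⟨ht1, ht2, fun δ hδ => ?_⟩
    have := agree (γ' := γ + 1) (fun γ'' hγ'' => hG γ'' (lt_of_le_of_lt hγ'' hγ1)) ht1 ht2 hδ
    exact ⟨this.2.2.1, this.2.2.2⟩
  refine ⟨⟨B, fun b => (runI σ b, runII σ b)⟩, hBm, ?_, ?_⟩
  · intro b hb
    dsimp only
    constructor
    · intro γ hγ
      obtain ⟨ht1, ht2, hag⟩ := key b hb γ hγ
      obtain ⟨h1, h2, h3⟩ :=
        ((hG (γ + 1) (hsucclt γ hγ)).2.1 _ ht1).1 γ (lt_self_add_one γ)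
      refine ⟨fun δ hδ => ?_, ?_, ?_⟩
      · rw [← (hag γ (lt_self_add_one γ)).1, ← (hag δ (hδ.trans (lt_self_add_one γ))).2]
        exact h1 δ hδ
      · rw [← (hag γ (lt_self_add_one γ)).1, ← (hag γ (lt_self_add_one γ)).2]
        exact h2
      · rw [← (hag γ (lt_self_add_one γ)).2, h3]
        exact move_congr σ
          (fun δ hδ => (hag δ (lt_of_le_of_lt hδ (lt_self_add_one γ))).1)
          (fun δ hδ => (hag δ (hδ.trans (lt_self_add_one γ))).2)
    · intro γ hγ
      obtain ⟨ht1, ht2, hag⟩ := key b hb γ hγ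
      have hinv := ((hG (γ + 1) (hsucclt γ hγ)).2.1 _ ht1).2 γ (lt_self_add_one γ)
      rw [← (hag γ (lt_self_add_one γ)).2]
      exact ht2.trans hinv
  · intro γ hγ b hb
    obtain ⟨c₀, hc₀, hbc₀⟩ := hBr γ hγ b hb
    have hex : ∃ c ∈ (sys σ γ).A, b ≤ c := ⟨c₀, hc₀, hbc₀⟩
    obtain ⟨ht1, ht2⟩ := thr_spec hex
    refine ⟨thr σ b γ, ht1, ht2, fun δ hδ => ?_⟩
    have := agree (γ' := γ) (fun γ'' hγ'' => hG γ'' (lt_of_le_of_lt hγ'' hγ)) ht1 ht2 hδ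
    exact ⟨this.2.2.1.symm, this.2.2.2.symm⟩

lemma winning_contradiction (σ : IIStrategy P) (k : Ordinal)
    (hw : WinningForII k σ)
    (hH : ∀ (A : Ordinal → Set P) (β : Ordinal), β ≤ k →
      (∀ γ < β, MaxAntichain (A γ)) →
      ∃ B, MaxAntichain B ∧ ∀ γ < β, RefinesAC B (A γ)) : False := by
  have hGood : ∀ β, β ≤ k → GoodAt σ β (sys σ) (sys σ β) := by
    intro β
    induction β using Ordinal.induction with
    | h β ih =>
      intro hβk
      by_cases hsucc : ∃ γ, β = γ + 1
      · obtain ⟨γ, rfl⟩ := hsucc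
        have hγk : γ < k := lt_of_lt_of_le (lt_self_add_one γ) hβk
        exact good_of_exists
          (exists_succ σ hw.1 hγk (ih γ (lt_self_add_one γ) (le_of_lt hγk)))
      · push_neg at hsucc
        obtain ⟨B, hBm, hBr⟩ := hH (fun γ => (sys σ γ).A) β hβk
          (fun γ hγ => (ih γ hγ (le_of_lt (lt_of_lt_of_le hγ hβk))).1)
        exact good_of_exists (exists_nonsucc σ hsucc
          (fun γ hγ => ih γ hγ (le_of_lt (lt_of_lt_of_le hγ hβk))) hBm hBr)
  obtain ⟨hA, hpos, -⟩ := hGood k le_rfl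
  obtain ⟨a, ha, -⟩ := hA.2 (Classical.arbitrary P)
  obtain ⟨hposa, hinva⟩ := hpos a ha
  exact hw.2 _ _ hposa ⟨a, fun β hβ => hinva β hβ⟩

end LimitSec

/-- If player II has a winning strategy in the game `G(P_λ, κ)` (for a nonempty
index set `λ`), then there is a family of at most `κ` maximal antichains of `P_λ`
such that no maximal antichain refines all of them. -/
theorem antichains_of_winning {ι : Type} [Nonempty ι] (κ : Cardinal)
    (h : ∃ σ : IIStrategy (PCond ι), WinningForII κ.ord σ) :
    ∃ (I : Type) (A : I → Set (PCond ι)),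
      Cardinal.mk I ≤ κ ∧ (∀ a, MaxAntichain (A a)) ∧
        ¬ ∃ B : Set (PCond ι), MaxAntichain B ∧ ∀ a, RefinesAC B (A a) := by
  by_contra hcon
  push_neg at hcon
  obtain ⟨σ, hw⟩ := h
  have : Nonempty (PCond ι) := ⟨⟨fun _ => Set.univ, fun _ => Set.infinite_univ⟩⟩
  refine winning_contradiction σ κ.ord hw ?_
  intro A β hβ hA
  have h1 : Cardinal.mk β.ToType ≤ κ := by
    rw [Cardinal.mk_toType]
    calc β.card ≤ κ.ord.card := Ordinal.card_le_card hβ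
      _ = κ := Cardinal.card_ord κ
  have h2 : ∀ i : β.ToType, MaxAntichain (A ((Ordinal.ToType.mk (o := β)).symm i).1) :=
    fun i => hA _ ((Ordinal.ToType.mk (o := β)).symm i).2
  obtain ⟨B, hBm, hBr⟩ :=
    hcon β.ToType (fun i => A ((Ordinal.ToType.mk (o := β)).symm i).1) h1 h2
  refine ⟨B, hBm, fun γ hγ => ?_⟩
  have := hBr ((Ordinal.ToType.mk (o := β)) ⟨γ, hγ⟩)
  rwa [OrderIso.symm_apply_apply] at this
end

section
/- For every nonzero cardinal λ, the distributivity number ℎ(λ) equals the least cardinal κ such that player II has a winning strategy in the game G(P_λ, κ) of length κ. -/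
open Set

/-- The distributivity number of `P_ι`: the least cardinal `κ` such that there is
a family of `κ` dense open subsets of `P_ι` whose intersection is not dense. -/
noncomputable def distNum (ι : Type) : Cardinal :=
  sInf {κ : Cardinal |
    ∃ (I : Type) (D : I → Set (PCond ι)),
      Cardinal.mk I = κ ∧ (∀ a, OpenIn (D a) ∧ DenseIn (D a)) ∧
        ¬ DenseIn (⋂ a, D a)}

/-- The distributivity number `ℎ(λ)` of `(P(ω)/fin)^λ` for a cardinal `λ`. -/
noncomputable def hCard (l : Cardinal) : Cardinal :=
  distNum (Quotient.out l)

-- ====================== auxiliary ======================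

namespace HGame

/-- compatibility in a preorder -/
def Compat {P : Type*} [Preorder P] (a b : P) : Prop := ∃ c, c ≤ a ∧ c ≤ b

lemma compat_self {P : Type*} [Preorder P] (a : P) : Compat a a := ⟨a, le_refl a, le_refl a⟩

lemma exists_maxAC {P : Type*} [Preorder P] (S : Set P) :
    ∃ A : Set P, A ⊆ S ∧ (∀ a ∈ A, ∀ b ∈ A, a ≠ b → ¬ Compat a b) ∧
      (∀ s ∈ S, ∃ a ∈ A, Compat s a) := by
  set 𝒜 : Set (Set P) := {A | A ⊆ S ∧ ∀ a ∈ A, ∀ b ∈ A, a ≠ b → ¬ Compat a b} with h𝒜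
  have hemp : (∅ : Set P) ∈ 𝒜 := ⟨empty_subset _, by simp⟩
  have hchain : ∀ c ⊆ 𝒜, IsChain (· ⊆ ·) c → c.Nonempty →
      ∃ ub ∈ 𝒜, ∀ s ∈ c, s ⊆ ub := by
    intro c hc hch _
    refine ⟨⋃₀ c, ⟨sUnion_subset fun t ht => (hc ht).1, ?_⟩, fun s hs => subset_sUnion_of_mem hs⟩
    intro a ha b hb hab
    obtain ⟨ta, hta, ha⟩ := ha
    obtain ⟨tb, htb, hb⟩ := hb
    rcases hch.total hta htb with h | h
    · exact (hc htb).2 a (h ha) b hb hab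
    · exact (hc hta).2 a ha b (h hb) hab
  obtain ⟨m, -, hm⟩ := zorn_subset_nonempty 𝒜 hchain ∅ hemp
  refine ⟨m, hm.prop.1, hm.prop.2, ?_⟩
  intro s hs
  by_contra hcon
  push_neg at hcon
  have hsm : s ∉ m := fun h => hcon s h (compat_self s)
  have hins : insert s m ∈ 𝒜 := by
    constructor
    · exact insert_subset hs hm.prop.1
    · intro a ha b hb hab
      rcases ha with rfl | ha
      · rcases hb with rfl | hb
        · exact absurd rfl hab
        · exact hcon b hb
      · rcases hb with rfl | hb
        · intro h; exact hcon a ha ⟨h.choose, h.choose_spec.2, h.choose_spec.1⟩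
        · exact hm.prop.2 a ha b hb hab
  exact hsm (hm.2 hins (subset_insert s m) (mem_insert s m))

noncomputable def maxAC {P : Type*} [Preorder P] (S : Set P) : Set P :=
  (exists_maxAC S).choose

lemma maxAC_sub {P : Type*} [Preorder P] (S : Set P) : maxAC S ⊆ S :=
  (exists_maxAC S).choose_spec.1

lemma maxAC_anti {P : Type*} [Preorder P] (S : Set P) :
    ∀ a ∈ maxAC S, ∀ b ∈ maxAC S, a ≠ b → ¬ Compat a b :=
  (exists_maxAC S).choose_spec.2.1

lemma maxAC_pred {P : Type*} [Preorder P] (S : Set P) :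
    ∀ s ∈ S, ∃ a ∈ maxAC S, Compat s a :=
  (exists_maxAC S).choose_spec.2.2

-- ====================== the strategic matrix ======================

variable {P : Type*} [Preorder P] [Nonempty P]

structure GStage (P : Type*) where
  A : Set P
  alive : Set P
  w : P → (Ordinal.{0} → P) × (Ordinal.{0} → P)

variable (σ : IIStrategy P)

/-- b is a coherent branch of length β through the matrix described by g. -/
def BranchAux (β : Ordinal) (g : ∀ γ, γ < β → GStage P)
    (b : (Ordinal → P) × (Ordinal → P)) : Prop :=
  IsPosition σ β b.1 b.2 ∧
    ∀ γ, ∀ h : γ < β, b.2 γ ∈ (g γ h).alive ∧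
      (∀ δ ≤ γ, ((g γ h).w (b.2 γ)).1 δ = b.1 δ) ∧
      (∀ δ ≤ γ, ((g γ h).w (b.2 γ)).2 δ = b.2 δ)

def CAux (β : Ordinal) (g : ∀ γ, γ < β → GStage P) : Set P :=
  {q | ∃ b, BranchAux σ β g b ∧ ∀ γ, ∀ _ : γ < β, q ≤ b.2 γ}

open scoped Classical in
noncomputable def chBr (β : Ordinal) (g : ∀ γ, γ < β → GStage P) (q : P) :
    (Ordinal → P) × (Ordinal → P) :=
  if h : q ∈ CAux σ β g then h.choose
  else (fun _ => Classical.arbitrary P, fun _ => Classical.arbitrary P)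

open scoped Classical in
noncomputable def newPI (β : Ordinal) (g : ∀ γ, γ < β → GStage P) (q : P) : Ordinal → P :=
  fun γ => if γ < β then (chBr σ β g q).1 γ else q

noncomputable def respAux (β : Ordinal) (g : ∀ γ, γ < β → GStage P) (q : P) : P :=
  σ.move β (newPI σ β g q) (chBr σ β g q).2

open scoped Classical in
noncomputable def newW (β : Ordinal) (g : ∀ γ, γ < β → GStage P) (q : P) :
    (Ordinal → P) × (Ordinal → P) :=
  (newPI σ β g q, fun γ => if γ < β then (chBr σ β g q).2 γ else respAux σ β g q)

def SAux (β : Ordinal) (g : ∀ γ, γ < β → GStage P) : Set P :=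
  {s | ∃ q, q ∈ CAux σ β g ∧ respAux σ β g q = s}

def DdAux (β : Ordinal) (g : ∀ γ, γ < β → GStage P) : Set P :=
  {q | ∀ q' ≤ q, q' ∉ CAux σ β g}

open scoped Classical in
noncomputable def bodyStage (β : Ordinal) (g : ∀ γ, γ < β → GStage P) : GStage P where
  A := maxAC (SAux σ β g) ∪ maxAC (DdAux σ β g)
  alive := maxAC (SAux σ β g)
  w := fun s =>
    if h : s ∈ SAux σ β g then newW σ β g h.choose
    else (fun _ => Classical.arbitrary P, fun _ => Classical.arbitrary P)

noncomputable def MStage : Ordinal → GStage P :=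
  Ordinal.lt_wf.fix (fun β g => bodyStage σ β g)

lemma MStage_eq (β : Ordinal) :
    MStage σ β = bodyStage σ β (fun γ _ => MStage σ γ) :=
  Ordinal.lt_wf.fix_eq _ β

end HGame

namespace HGame

variable {P : Type*} [Preorder P] [Nonempty P]

lemma ord_lt_succ (γ : Ordinal) : γ < γ + 1 := by
  rw [Ordinal.add_one_eq_succ]; exact Order.lt_succ γ

section MatrixLemmas

variable (σ : IIStrategy P)

noncomputable def gMat (β : Ordinal) : ∀ γ, γ < β → GStage P := fun γ _ => MStage σ γ

def CM (β : Ordinal) : Set P := CAux σ β (gMat σ β)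
noncomputable def respM (β : Ordinal) (q : P) : P := respAux σ β (gMat σ β) q
def SM (β : Ordinal) : Set P := SAux σ β (gMat σ β)
def DdM (β : Ordinal) : Set P := DdAux σ β (gMat σ β)

lemma MA_eq (β : Ordinal) : (MStage σ β).A = maxAC (SM σ β) ∪ maxAC (DdM σ β) := by
  rw [MStage_eq]; rfl

lemma Malive_eq (β : Ordinal) : (MStage σ β).alive = maxAC (SM σ β) := by
  rw [MStage_eq]; rfl

lemma alive_sub_A (β : Ordinal) : (MStage σ β).alive ⊆ (MStage σ β).A := by
  rw [MA_eq, Malive_eq]; exact subset_union_left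

lemma Mw_spec {β : Ordinal} {s : P} (hs : s ∈ SM σ β) :
    ∃ q, q ∈ CM σ β ∧ respM σ β q = s ∧
      (MStage σ β).w s = newW σ β (gMat σ β) q := by
  refine ⟨hs.choose, hs.choose_spec.1, hs.choose_spec.2, ?_⟩
  rw [MStage_eq]
  exact dif_pos hs

end MatrixLemmas

section StageLemmas

variable {σ : IIStrategy P} {κord : Ordinal}

lemma CM_down {β : Ordinal} {q q' : P} (h : q ∈ CM σ β) (hle : q' ≤ q) : q' ∈ CM σ β := by
  obtain ⟨b, hb, hq⟩ := h
  exact ⟨b, hb, fun γ hγ => le_trans hle (hq γ hγ)⟩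

lemma chBr_spec {β : Ordinal} {q : P} (hq : q ∈ CM σ β) :
    BranchAux σ β (gMat σ β) (chBr σ β (gMat σ β) q) ∧
      ∀ γ, ∀ _ : γ < β, q ≤ (chBr σ β (gMat σ β) q).2 γ := by
  have : chBr σ β (gMat σ β) q = hq.choose := dif_pos hq
  rw [this]
  exact hq.choose_spec

lemma newW_spec (hLeg : LegalStrategy κord σ) {β : Ordinal} (hβ : β < κord) {q : P}
    (hq : q ∈ CM σ β) :
    IsPosition σ (β + 1) (newW σ β (gMat σ β) q).1 (newW σ β (gMat σ β) q).2 ∧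
    (newW σ β (gMat σ β) q).2 β = respM σ β q ∧
    respM σ β q ≤ q ∧
    (∀ γ, ∀ _ : γ < β,
      (newW σ β (gMat σ β) q).2 γ ∈ (MStage σ γ).alive ∧
      (∀ δ, δ ≤ γ → ((MStage σ γ).w ((newW σ β (gMat σ β) q).2 γ)).1 δ
          = (newW σ β (gMat σ β) q).1 δ) ∧
      (∀ δ, δ ≤ γ → ((MStage σ γ).w ((newW σ β (gMat σ β) q).2 γ)).2 δ
          = (newW σ β (gMat σ β) q).2 δ)) ∧
    (newW σ β (gMat σ β) q).1 β = q := by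
  classical
  obtain ⟨⟨hpos, hcoh⟩, hlow⟩ := chBr_spec hq
  set b := chBr σ β (gMat σ β) q with hbdef
  have hw1 : (newW σ β (gMat σ β) q).1 = newPI σ β (gMat σ β) q := rfl
  have hpI : ∀ γ, γ < β → (newW σ β (gMat σ β) q).1 γ = b.1 γ := by
    intro γ hγ; rw [hw1]; unfold newPI; rw [if_pos hγ]
  have hpIβ : (newW σ β (gMat σ β) q).1 β = q := by
    rw [hw1]; unfold newPI; rw [if_neg (lt_irrefl β)]
  have hpII : ∀ γ, γ < β → (newW σ β (gMat σ β) q).2 γ = b.2 γ := by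
    intro γ hγ; show (if γ < β then b.2 γ else respAux σ β (gMat σ β) q) = b.2 γ
    rw [if_pos hγ]
  have hpIIβ : (newW σ β (gMat σ β) q).2 β = respM σ β q := by
    show (if β < β then b.2 β else respAux σ β (gMat σ β) q) = respM σ β q
    rw [if_neg (lt_irrefl β)]; rfl
  have hposmod : IsPosition σ β (newW σ β (gMat σ β) q).1 (newW σ β (gMat σ β) q).2 := by
    intro γ hγ
    obtain ⟨h1, h2, h3⟩ := hpos γ hγ
    refine ⟨fun δ hδ => ?_, ?_, ?_⟩
    · rw [hpI γ hγ, hpII δ (hδ.trans hγ)]; exact h1 δ hδ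
    · rw [hpI γ hγ, hpII γ hγ]; exact h2
    · rw [hpII γ hγ, h3]
      exact σ.depends_only_on_past γ b.1 b.2 _ _
        (fun δ hδ => (hpI δ (lt_of_le_of_lt hδ hγ)).symm)
        (fun δ hδ => (hpII δ (hδ.trans hγ)).symm)
  have hmove : respM σ β q
      = σ.move β (newW σ β (gMat σ β) q).1 (newW σ β (gMat σ β) q).2 := by
    show σ.move β (newPI σ β (gMat σ β) q) b.2 = _
    rw [← hw1]
    exact σ.depends_only_on_past β _ b.2 _ _ (fun δ _ => rfl)
      (fun δ hδ => (hpII δ hδ).symm)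
  have hlegal : respM σ β q ≤ q := by
    have hlow' : ∀ γ, γ < β → (newW σ β (gMat σ β) q).1 β ≤ (newW σ β (gMat σ β) q).2 γ := by
      intro γ hγ; rw [hpIβ, hpII γ hγ]; exact hlow γ hγ
    have := hLeg β hβ _ _ hposmod hlow'
    rw [← hmove, hpIβ] at this
    exact this
  have hsucc : IsPosition σ (β + 1) (newW σ β (gMat σ β) q).1 (newW σ β (gMat σ β) q).2 := by
    intro γ hγ
    rw [Ordinal.add_one_eq_succ, Order.lt_succ_iff] at hγ
    rcases lt_or_eq_of_le hγ with hlt | rfl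
    · exact hposmod γ hlt
    · refine ⟨fun δ hδ => ?_, ?_, ?_⟩
      · rw [hpIβ, hpII δ hδ]; exact hlow δ hδ
      · rw [hpIIβ, hpIβ]; exact hlegal
      · rw [hpIIβ, hmove]
  refine ⟨hsucc, hpIIβ, hlegal, ?_, hpIβ⟩
  intro γ hγ
  obtain ⟨hal, hag1, hag2⟩ := hcoh γ hγ
  unfold gMat at hal hag1 hag2
  rw [hpII γ hγ]
  refine ⟨hal, fun δ hδ => ?_, fun δ hδ => ?_⟩
  · rw [hag1 δ hδ, hpI δ (lt_of_le_of_lt hδ hγ)]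
  · rcases lt_or_eq_of_le hδ with hlt | rfl
    · rw [hag2 δ hδ, hpII δ (hlt.trans hγ)]
    · rw [hag2 δ le_rfl, hpII δ hγ]

lemma alive_spec (hLeg : LegalStrategy κord σ) {β : Ordinal} (hβ : β < κord) {s : P}
    (hs : s ∈ (MStage σ β).alive) :
    IsPosition σ (β + 1) ((MStage σ β).w s).1 ((MStage σ β).w s).2 ∧
    ((MStage σ β).w s).2 β = s ∧
    ∀ γ, ∀ _ : γ < β,
      ((MStage σ β).w s).2 γ ∈ (MStage σ γ).alive ∧
      (∀ δ, δ ≤ γ → ((MStage σ γ).w (((MStage σ β).w s).2 γ)).1 δ = ((MStage σ β).w s).1 δ) ∧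
      (∀ δ, δ ≤ γ → ((MStage σ γ).w (((MStage σ β).w s).2 γ)).2 δ = ((MStage σ β).w s).2 δ) := by
  have hsS : s ∈ SM σ β := maxAC_sub _ (by rwa [Malive_eq] at hs)
  obtain ⟨q, hqC, hqr, hweq⟩ := Mw_spec σ hsS
  obtain ⟨h1, h2, _, h4, _⟩ := newW_spec hLeg hβ hqC
  rw [hweq]
  exact ⟨h1, by rw [h2, hqr], h4⟩

lemma SM_resp_le (hLeg : LegalStrategy κord σ) {β : Ordinal} (hβ : β < κord) {s : P}
    (hs : s ∈ SM σ β) : ∃ q0, q0 ∈ CM σ β ∧ s ≤ q0 := by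
  obtain ⟨q0, hq0, hresp⟩ := hs
  exact ⟨q0, hq0, hresp ▸ (newW_spec hLeg hβ hq0).2.2.1⟩

lemma A_pairwise (hLeg : LegalStrategy κord σ) {β : Ordinal} (hβ : β < κord) :
    ∀ a ∈ (MStage σ β).A, ∀ b ∈ (MStage σ β).A, a ≠ b → ¬ Compat a b := by
  intro a ha b hb hne
  rw [MA_eq] at ha hb
  rcases ha with ha | ha <;> rcases hb with hb | hb
  · exact maxAC_anti _ a ha b hb hne
  · rintro ⟨c, hca, hcb⟩
    obtain ⟨q0, hq0, hle⟩ := SM_resp_le hLeg hβ (maxAC_sub _ ha)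
    exact (maxAC_sub _ hb) c hcb (CM_down hq0 (le_trans hca hle))
  · rintro ⟨c, hca, hcb⟩
    obtain ⟨q0, hq0, hle⟩ := SM_resp_le hLeg hβ (maxAC_sub _ hb)
    exact (maxAC_sub _ ha) c hca (CM_down hq0 (le_trans hcb hle))
  · exact maxAC_anti _ a ha b hb hne

lemma A_predense (hLeg : LegalStrategy κord σ) {β : Ordinal} (hβ : β < κord) (p : P) :
    ∃ a ∈ (MStage σ β).A, Compat p a := by
  by_cases hp : ∃ q0, q0 ≤ p ∧ q0 ∈ CM σ β
  · obtain ⟨q0, hq0p, hq0⟩ := hp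
    have hsS : respM σ β q0 ∈ SM σ β := ⟨q0, hq0, rfl⟩
    obtain ⟨a, ha, c, hc1, hc2⟩ := maxAC_pred _ _ hsS
    refine ⟨a, by rw [MA_eq]; exact Or.inl ha,
      c, le_trans hc1 (le_trans (newW_spec hLeg hβ hq0).2.2.1 hq0p), hc2⟩
  · push_neg at hp
    have hpD : p ∈ DdM σ β := fun q' hq' hC => hp q' hq' hC
    obtain ⟨a, ha, hcomp⟩ := maxAC_pred _ _ hpD
    exact ⟨a, by rw [MA_eq]; exact Or.inr ha, hcomp⟩

end StageLemmas

end HGame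

namespace HGame

variable {P : Type*} [Preorder P] [Nonempty P]

theorem no_common {σ : IIStrategy P} {κord : Ordinal}
    (hW : WinningForII κord σ) (q : P)
    (hq : ∀ β, β < κord → ∃ a ∈ (MStage σ β).A, q ≤ a) : False := by
  classical
  have hLeg := hW.1
  choose aFn haF1 haF2 using hq
  set aF : Ordinal → P := fun β =>
    if h : β < κord then aFn β h else Classical.arbitrary P with haFdef
  have aF_mem : ∀ β, ∀ h : β < κord, aF β ∈ (MStage σ β).A := by
    intro β h
    show (if h : β < κord then aFn β h else Classical.arbitrary P) ∈ _
    rw [dif_pos h]; exact haF1 β h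
  have aF_le : ∀ β, ∀ h : β < κord, q ≤ aF β := by
    intro β h
    show q ≤ (if h : β < κord then aFn β h else Classical.arbitrary P)
    rw [dif_pos h]; exact haF2 β h
  have uniq : ∀ β, ∀ _ : β < κord, ∀ x, x ∈ (MStage σ β).A → q ≤ x → x = aF β := by
    intro β hβ x hx hqx
    by_contra hne
    exact A_pairwise hLeg hβ x hx (aF β) (aF_mem β hβ) hne ⟨q, hqx, aF_le β hβ⟩
  set wF : Ordinal → (Ordinal → P) × (Ordinal → P) :=
    fun β => (MStage σ β).w (aF β) with hwFdef
  -- per-stage facts for alive nodes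
  have fact : ∀ γ, ∀ _ : γ < κord, aF γ ∈ (MStage σ γ).alive →
      ((wF γ).2 γ = aF γ) ∧ IsPosition σ (γ + 1) (wF γ).1 (wF γ).2 ∧
      (∀ δ, δ < γ → (wF γ).2 δ = aF δ) ∧
      (∀ δ, δ ≤ γ → (wF γ).1 δ = (wF δ).1 δ) := by
    intro γ hγκ hal
    obtain ⟨hpos, h2γ, hcoh⟩ := alive_spec hLeg hγκ hal
    have hstage := hpos γ (ord_lt_succ γ)
    have hkey : ∀ δ, δ < γ → (wF γ).2 δ = aF δ := by
      intro δ hδ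
      have hqle : q ≤ (wF γ).2 δ := by
        calc q ≤ aF γ := aF_le γ hγκ
        _ = (wF γ).2 γ := h2γ.symm
        _ ≤ (wF γ).1 γ := hstage.2.1
        _ ≤ (wF γ).2 δ := hstage.1 δ hδ
      exact uniq δ (hδ.trans hγκ) _ (alive_sub_A σ δ (hcoh δ hδ).1) hqle
    refine ⟨h2γ, hpos, hkey, ?_⟩
    intro δ hδ
    rcases lt_or_eq_of_le hδ with hlt | rfl
    · have h1 := (hcoh δ hlt).2.1 δ le_rfl
      rw [hkey δ hlt] at h1
      exact h1.symm
    · rfl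
  -- the common branch through the matrix determined by q
  have main : ∀ β, β ≤ κord → (∀ γ, γ < β → aF γ ∈ (MStage σ γ).alive) →
      IsPosition σ β (fun γ => (wF γ).1 γ) aF := by
    intro β hβκ hAl γ hγ
    have hγκ := lt_of_lt_of_le hγ hβκ
    obtain ⟨h2γ, hpos, hkey, hagree⟩ := fact γ hγκ (hAl γ hγ)
    have hstage := hpos γ (ord_lt_succ γ)
    refine ⟨fun δ hδ => ?_, ?_, ?_⟩
    · have := hstage.1 δ hδ; rwa [hkey δ hδ] at this
    · have := hstage.2.1; rwa [h2γ] at this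
    · have hmv := hstage.2.2
      rw [h2γ] at hmv
      rw [hmv]
      exact σ.depends_only_on_past γ _ _ _ _ (fun δ hδ => hagree δ hδ)
        (fun δ hδ => hkey δ hδ)
  have branchOf : ∀ β, β ≤ κord → (∀ γ, γ < β → aF γ ∈ (MStage σ γ).alive) →
      q ∈ CM σ β := by
    intro β hβκ hAl
    refine ⟨(fun γ => (wF γ).1 γ, aF), ⟨main β hβκ hAl, ?_⟩,
      fun γ hγ => aF_le γ (lt_of_lt_of_le hγ hβκ)⟩
    intro γ hγ
    have hγκ := lt_of_lt_of_le hγ hβκ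
    obtain ⟨h2γ, hpos, hkey, hagree⟩ := fact γ hγκ (hAl γ hγ)
    refine ⟨hAl γ hγ, fun δ hδ => ?_, fun δ hδ => ?_⟩
    · exact hagree δ hδ
    · rcases lt_or_eq_of_le hδ with hlt | rfl
      · exact hkey δ hlt
      · exact h2γ
  have allAlive : ∀ β, β < κord → aF β ∈ (MStage σ β).alive := by
    intro β
    induction β using Ordinal.induction with
    | h β IH =>
      intro hβκ
      have hqC : q ∈ CM σ β := branchOf β hβκ.le (fun γ hγ => IH γ hγ (hγ.trans hβκ))
      have hmem := aF_mem β hβκ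
      rw [MA_eq] at hmem
      rcases hmem with h | h
      · rwa [Malive_eq]
      · exact absurd hqC ((maxAC_sub _ h) q (aF_le β hβκ))
  have hrun : IsRun κord σ (fun γ => (wF γ).1 γ) aF := main κord le_rfl allAlive
  exact hW.2 _ _ hrun ⟨q, fun β hβ => aF_le β hβ⟩

/-- Part (b): a winning strategy for II of length `κ.ord` yields a family of `κ`
dense open sets with non-dense (indeed empty) intersection. -/
theorem gameToDense {Q : Type} [Preorder Q] [Nonempty Q] (κ : Cardinal)
    (σ : IIStrategy Q) (hW : WinningForII κ.ord σ) :
    ∃ (I : Type) (D : I → Set Q), Cardinal.mk I = κ ∧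
      (∀ a, OpenIn (D a) ∧ DenseIn (D a)) ∧ ¬ DenseIn (⋂ a, D a) := by
  classical
  refine ⟨(κ.ord).ToType,
    fun t => {x | ∃ a ∈ (MStage σ (((Ordinal.ToType.mk (o := κ.ord)).symm t : Set.Iio κ.ord) : Ordinal)).A, x ≤ a},
    ?_, ?_, ?_⟩
  · rw [Cardinal.mk_toType, Cardinal.card_ord]
  · intro t
    set β : Ordinal := (((Ordinal.ToType.mk (o := κ.ord)).symm t : Set.Iio κ.ord) : Ordinal)
    have hβ : β < κ.ord := ((Ordinal.ToType.mk (o := κ.ord)).symm t).2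
    constructor
    · rintro p ⟨a, ha, hpa⟩ r hrp
      exact ⟨a, ha, le_trans hrp hpa⟩
    · intro p
      obtain ⟨a, ha, c, hc1, hc2⟩ := A_predense hW.1 hβ p
      exact ⟨c, ⟨a, ha, hc2⟩, hc1⟩
  · intro hD
    obtain ⟨x, hx, -⟩ := hD (Classical.arbitrary Q)
    refine no_common hW x ?_
    intro β hβ
    have := Set.mem_iInter.mp hx (Ordinal.ToType.mk (o := κ.ord) ⟨β, hβ⟩)
    simpa using this
end HGame

namespace HGame

open Set

instance instNonemptyPCond (ι : Type*) : Nonempty (PCond ι) :=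
  ⟨⟨fun _ => Set.univ, fun _ => Set.infinite_univ⟩⟩

lemma exists_enum {S : Set ℕ} (hS : S.Infinite) :
    ∃ f : ℕ → ℕ, Function.Injective f ∧ Set.range f = S := by
  have h2 : Infinite ↥S := hS.to_subtype
  obtain ⟨d⟩ := nonempty_denumerable_iff.mpr ⟨inferInstance, h2⟩
  set e := @Denumerable.eqv ↥S d with hedef
  refine ⟨fun n => ((e.symm n : ↥S) : ℕ), ?_, ?_⟩
  · intro a b h
    exact e.symm.injective (Subtype.ext h)
  · ext x
    constructor
    · rintro ⟨n, rfl⟩; exact (e.symm n).2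
    · intro hx; exact ⟨e ⟨x, hx⟩, by simp⟩

noncomputable def enumOf {S : Set ℕ} (hS : S.Infinite) : ℕ → ℕ := (exists_enum hS).choose

lemma enumOf_inj {S : Set ℕ} (hS : S.Infinite) : Function.Injective (enumOf hS) :=
  (exists_enum hS).choose_spec.1

lemma enumOf_range {S : Set ℕ} (hS : S.Infinite) : Set.range (enumOf hS) = S :=
  (exists_enum hS).choose_spec.2

lemma preim_inf {f : ℕ → ℕ} (hf : Function.Injective f) {A : Set ℕ}
    (hA : A.Infinite) (hAT : (A \ Set.range f).Finite) : (f ⁻¹' A).Infinite := by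
  by_contra hfin
  rw [Set.not_infinite] at hfin
  apply hA
  have h1 : (A ∩ Set.range f).Finite := by
    rw [← Set.image_preimage_eq_inter_range]
    exact hfin.image f
  refine (h1.union hAT).subset ?_
  intro x hx
  by_cases h : x ∈ Set.range f
  · exact Or.inl ⟨hx, h⟩
  · exact Or.inr ⟨hx, h⟩

open scoped Classical in
noncomputable def prein (f : ℕ → ℕ) (A : Set ℕ) : Set ℕ :=
  if (f ⁻¹' A).Infinite then f ⁻¹' A else Set.univ

lemma prein_infinite (f : ℕ → ℕ) (A : Set ℕ) : (prein f A).Infinite := by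
  unfold prein
  split
  · assumption
  · exact Set.infinite_univ

lemma prein_eq {f : ℕ → ℕ} {A : Set ℕ} (h : (f ⁻¹' A).Infinite) : prein f A = f ⁻¹' A :=
  if_pos h

variable {ι : Type}

noncomputable def transC (c d r : PCond ι) : PCond ι :=
  ⟨fun α => enumOf (d.2 α) '' prein (enumOf (c.2 α)) (r.1 α),
   fun α => (prein_infinite _ _).image ((enumOf_inj (d.2 α)).injOn)⟩

lemma transC_le_snd (c d r : PCond ι) : transC c d r ≤ d := by
  intro α
  have hsub : (transC c d r).1 α ⊆ d.1 α := by
    rw [← enumOf_range (d.2 α)]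
    exact Set.image_subset_range _ _
  rw [Set.diff_eq_empty.mpr hsub]
  exact Set.finite_empty

lemma guard_of_le {c r : PCond ι} (h : r ≤ c) (α : ι) :
    (enumOf (c.2 α) ⁻¹' (r.1 α)).Infinite :=
  preim_inf (enumOf_inj _) (r.2 α) (by rw [enumOf_range]; exact h α)

lemma transC_cancel {c d u r : PCond ι} (hrc : r ≤ c) (hu : u ≤ transC c d r) :
    transC d c u ≤ r := by
  intro α
  set f := enumOf (c.2 α) with hfdef
  set g := enumOf (d.2 α) with hgdef
  have hfin : Function.Injective f := enumOf_inj _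
  have hgin : Function.Injective g := enumOf_inj _
  have hs : (transC c d r).1 α = g '' (f ⁻¹' (r.1 α)) := by
    show g '' prein f (r.1 α) = _
    rw [prein_eq (guard_of_le hrc α)]
  have hF : (u.1 α \ g '' (f ⁻¹' (r.1 α))).Finite := by rw [← hs]; exact hu α
  have hug : (g ⁻¹' (u.1 α)).Infinite := by
    apply preim_inf hgin (u.2 α)
    refine hF.subset ?_
    intro x hx
    exact ⟨hx.1, fun hmem => hx.2 (Set.image_subset_range _ _ hmem)⟩
  have htr : (transC d c u).1 α = f '' (g ⁻¹' (u.1 α)) := by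
    show f '' prein g (u.1 α) = _
    rw [prein_eq hug]
  rw [htr]
  have hsplit : g ⁻¹' (u.1 α) ⊆ (f ⁻¹' (r.1 α)) ∪ (g ⁻¹' (u.1 α \ g '' (f ⁻¹' (r.1 α)))) := by
    intro x hx
    by_cases hmem : g x ∈ g '' (f ⁻¹' (r.1 α))
    · obtain ⟨y, hy, hyx⟩ := hmem
      left
      rwa [← hgin hyx]
    · right; exact ⟨hx, hmem⟩
  have hfin2 : (f '' (g ⁻¹' (u.1 α \ g '' (f ⁻¹' (r.1 α))))).Finite :=
    (hF.preimage hgin.injOn).image f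
  refine hfin2.subset ?_
  rintro x ⟨hx1, hx2⟩
  obtain ⟨y, hy, rfl⟩ := hx1
  rcases hsplit hy with h | h
  · exact absurd (Set.image_preimage_subset f (r.1 α) ⟨y, h, rfl⟩) hx2
  · exact ⟨y, h, rfl⟩

open scoped Classical in
noncomputable def aStrat (p0 : PCond ι) (dw : Ordinal → PCond ι → PCond ι) (κo : Ordinal) :
    IIStrategy (PCond ι) where
  move := fun β pI _pII =>
    if β < κo then transC p0 (pI 0) (dw β (transC (pI 0) p0 (pI β))) else pI β
  depends_only_on_past := by
    intro β pI pII pI' pII' h1 _h2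
    simp only [h1 0 (zero_le (a := β)), h1 β le_rfl]

theorem denseToGame {ι : Type} (κ : Cardinal) (I : Type) (D : I → Set (PCond ι))
    (hmk : Cardinal.mk I = κ) (hDO : ∀ a, OpenIn (D a) ∧ DenseIn (D a))
    (hnd : ¬ DenseIn (⋂ a, D a)) :
    ∃ σ : IIStrategy (PCond ι), WinningForII κ.ord σ := by
  classical
  have hne : Nonempty I := by
    by_contra h
    rw [not_nonempty_iff] at h
    exact hnd (by rw [Set.iInter_of_empty]; intro p; exact ⟨p, trivial, le_refl p⟩)
  haveI := hne
  have hκ : κ ≠ 0 := by rw [← hmk]; exact Cardinal.mk_ne_zero I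
  have hκord : (0 : Ordinal) < κ.ord := by
    rw [pos_iff_ne_zero]
    intro h
    apply hκ
    rw [← Cardinal.card_ord κ, h, Ordinal.card_zero]
  have hnd' : ¬ ∀ p, ∃ q ∈ (⋂ a, D a), q ≤ p := hnd
  push_neg at hnd'
  obtain ⟨p0, hp0⟩ := hnd'
  have hEq : Cardinal.mk (κ.ord).ToType = Cardinal.mk I := by
    rw [Cardinal.mk_toType, Cardinal.card_ord, hmk]
  obtain ⟨E⟩ := Cardinal.eq.mp hEq
  set e : Ordinal → I := fun β =>
    if h : β < κ.ord then E ((Ordinal.ToType.mk (o := κ.ord)) ⟨β, h⟩)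
    else Classical.arbitrary I with hedef
  have hesurj : ∀ a : I, ∃ β, β < κ.ord ∧ e β = a := by
    intro a
    set t := (Ordinal.ToType.mk (o := κ.ord)).symm (E.symm a) with htdef
    refine ⟨t.1, t.2, ?_⟩
    rw [hedef]
    dsimp only
    rw [dif_pos (show (t : Ordinal) < κ.ord from t.2)]
    have h1 : (⟨t.1, (show (t : Ordinal) < κ.ord from t.2)⟩ : Set.Iio κ.ord) = t := rfl
    rw [h1, htdef]
    simp
  set dw : Ordinal → PCond ι → PCond ι := fun β s => ((hDO (e β)).2 s).choose with hdwdef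
  have hdw1 : ∀ β s, dw β s ∈ D (e β) := fun β s => ((hDO (e β)).2 s).choose_spec.1
  have hdw2 : ∀ β s, dw β s ≤ s := fun β s => ((hDO (e β)).2 s).choose_spec.2
  set σ := aStrat p0 dw κ.ord with hσdef
  have hmoveeq : ∀ β (pI pII : Ordinal → PCond ι), β < κ.ord →
      σ.move β pI pII = transC p0 (pI 0) (dw β (transC (pI 0) p0 (pI β))) := by
    intro β pI pII hβ
    show (if β < κ.ord then _ else _) = _
    rw [if_pos hβ]
  have hleg : LegalStrategy κ.ord σ := by
    intro β hβ pI pII hpos hlow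
    rw [hmoveeq β pI pII hβ]
    have hle0 : pI β ≤ pI 0 := by
      rcases eq_or_lt_of_le (zero_le (a := β)) with h0 | h0
      · rw [← h0]
      · exact le_trans (hlow 0 h0) ((hpos 0 h0).2.1)
    exact transC_cancel hle0 (hdw2 β _)
  refine ⟨σ, hleg, ?_⟩
  rintro pI pII hrun ⟨q, hqb⟩
  set p := pI 0 with hpdef
  have hstage : ∀ β, β < κ.ord →
      pII β = transC p0 p (dw β (transC p p0 (pI β))) := by
    intro β hβ
    rw [(hrun β hβ).2.2, hmoveeq β pI pII hβ]
  set qh := transC p p0 q with hqhdef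
  have hqhp0 : qh ≤ p0 := transC_le_snd _ _ _
  have hqhD : ∀ β, β < κ.ord → qh ∈ D (e β) := by
    intro β hβ
    have hu1 : dw β (transC p p0 (pI β)) ∈ D (e β) := hdw1 β _
    have hu2 : dw β (transC p p0 (pI β)) ≤ p0 :=
      le_trans (hdw2 β _) (transC_le_snd _ _ _)
    have hqu : q ≤ transC p0 p (dw β (transC p p0 (pI β))) := by
      rw [← hstage β hβ]; exact hqb β hβ
    exact (hDO (e β)).1 _ hu1 qh (transC_cancel hu2 hqu)
  have hqhint : qh ∈ ⋂ a, D a := by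
    rw [Set.mem_iInter]
    intro a
    obtain ⟨β, hβ, rfl⟩ := hesurj a
    exact hqhD β hβ
  exact hp0 qh hqhint hqhp0

end HGame

namespace HGame

open Set

lemma even_inf : {n : ℕ | Even n}.Infinite :=
  Set.infinite_of_injective_forall_mem (f := fun k : ℕ => 2 * k)
    (fun a b h => by dsimp at h; omega) (fun k => ⟨k, (two_mul k)⟩)

lemma odd_inf : {n : ℕ | ¬ Even n}.Infinite :=
  Set.infinite_of_injective_forall_mem (f := fun k : ℕ => 2 * k + 1)
    (fun a b h => by dsimp at h; omega)
    (fun k => by simp only [Set.mem_setOf_eq]; rintro ⟨r, hr⟩; omega)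

variable {ι : Type}

open scoped Classical in
noncomputable def updCond (p : PCond ι) (α₀ : ι) (T : Set ℕ) (hT : T.Infinite) : PCond ι :=
  ⟨fun α => if α = α₀ then T else p.1 α, by
    intro α
    dsimp only
    by_cases hα : α = α₀
    · rw [if_pos hα]; exact hT
    · rw [if_neg hα]; exact p.2 α⟩

open scoped Classical in
lemma updCond_val (p : PCond ι) (α₀ : ι) (T : Set ℕ) (hT : T.Infinite) (α : ι) :
    (updCond p α₀ T hT).1 α = if α = α₀ then T else p.1 α := rfl

lemma updCond_le (p : PCond ι) (α₀ : ι) (T : Set ℕ) (hT : T.Infinite)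
    (hsub : T ⊆ p.1 α₀) : updCond p α₀ T hT ≤ p := by
  intro α
  rw [updCond_val]
  by_cases hα : α = α₀
  · rw [if_pos hα, hα, Set.diff_eq_empty.mpr hsub]
    exact Set.finite_empty
  · rw [if_neg hα, Set.diff_self]
    exact Set.finite_empty

lemma updCond_at (p : PCond ι) (α₀ : ι) (T : Set ℕ) (hT : T.Infinite) :
    (updCond p α₀ T hT).1 α₀ = T := by rw [updCond_val, if_pos rfl]

theorem distWitness (ι : Type) [Nonempty ι] :
    ∃ (I : Type) (D : I → Set (PCond ι)),
      Cardinal.mk I = Cardinal.mk (Set ℕ) ∧ (∀ a, OpenIn (D a) ∧ DenseIn (D a)) ∧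
        ¬ DenseIn (⋂ a, D a) := by
  classical
  set α₀ := Classical.arbitrary ι with hα₀
  refine ⟨Set ℕ, fun A => {q : PCond ι | (q.1 α₀ \ A).Finite ∨ (q.1 α₀ ∩ A).Finite},
    rfl, ?_, ?_⟩
  · intro A
    constructor
    · rintro qq hqq r hr
      have hsub : ∀ (X : Set ℕ), (qq.1 α₀ ∩ X).Finite ∨ True → True := fun _ _ => trivial
      rcases hqq with h | h
      · left
        refine ((hr α₀).union h).subset ?_
        intro x hx
        by_cases hq : x ∈ qq.1 α₀
        · exact Or.inr ⟨hq, hx.2⟩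
        · exact Or.inl ⟨hx.1, hq⟩
      · right
        refine ((hr α₀).union h).subset ?_
        intro x hx
        by_cases hq : x ∈ qq.1 α₀
        · exact Or.inr ⟨hq, hx.2⟩
        · exact Or.inl ⟨hx.1, hq⟩
    · intro p
      have hsp : (p.1 α₀ ∩ A).Infinite ∨ (p.1 α₀ \ A).Infinite := by
        by_contra h
        push_neg at h
        exact (p.2 α₀) (by
          rw [← Set.inter_union_diff (p.1 α₀) A]
          exact h.1.union h.2)
      rcases hsp with h | h
      · refine ⟨updCond p α₀ (p.1 α₀ ∩ A) h, ?_, updCond_le _ _ _ _ Set.inter_subset_left⟩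
        left
        rw [updCond_at, Set.diff_eq_empty.mpr Set.inter_subset_right]
        exact Set.finite_empty
      · refine ⟨updCond p α₀ (p.1 α₀ \ A) h, ?_, updCond_le _ _ _ _ Set.diff_subset⟩
        right
        rw [updCond_at, Set.diff_inter_self]
        exact Set.finite_empty
  · intro hD
    obtain ⟨q, hq, -⟩ := hD (Classical.arbitrary (PCond ι))
    rw [Set.mem_iInter] at hq
    set T := q.1 α₀ with hTdef
    have hT : T.Infinite := q.2 α₀
    set A := enumOf hT '' {n | Even n} with hAdef
    have hA : A.Infinite := even_inf.image ((enumOf_inj hT).injOn)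
    have hB : (T \ A).Infinite := by
      refine (odd_inf.image ((enumOf_inj hT).injOn)).mono ?_
      rintro x ⟨n, hn, rfl⟩
      constructor
      · have h := Set.mem_range_self (f := enumOf hT) n
        rwa [enumOf_range hT] at h
      · rintro ⟨m, hm, hme⟩
        exact hn (by rwa [enumOf_inj hT hme] at hm)
    have hAT : A ⊆ T := by
      have h := Set.image_subset_range (enumOf hT) {n | Even n}
      rwa [enumOf_range hT] at h
    rcases hq A with h | h
    · exact hB h
    · exact hA (h.subset (fun x hx => ⟨hAT hx, hx⟩))

end HGame

/-- For every nonzero cardinal `λ`, the distributivity number `ℎ(λ)` equals the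
least cardinal `κ` such that player II has a winning strategy in the game
`G(P_λ, κ)` of length `κ`. -/
theorem hCard_eq_game_number (l : Cardinal) (hl : l ≠ 0) :
    hCard l =
      sInf {κ : Cardinal |
        ∃ σ : IIStrategy (PCond (Quotient.out l)), WinningForII κ.ord σ} := by
  classical
  haveI : Nonempty (Quotient.out l) :=
    Cardinal.mk_ne_zero_iff.mp (by rw [Cardinal.mk_out]; exact hl)
  set ι := Quotient.out l with hι
  set dS : Set Cardinal := {κ : Cardinal |
    ∃ (I : Type) (D : I → Set (PCond ι)),
      Cardinal.mk I = κ ∧ (∀ a, OpenIn (D a) ∧ DenseIn (D a)) ∧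
        ¬ DenseIn (⋂ a, D a)} with hdS
  set gS : Set Cardinal :=
    {κ : Cardinal | ∃ σ : IIStrategy (PCond ι), WinningForII κ.ord σ} with hgS
  have hdSne : dS.Nonempty := by
    obtain ⟨I, D, h1, h2, h3⟩ := HGame.distWitness ι
    exact ⟨Cardinal.mk (Set ℕ), I, D, h1, h2, h3⟩
  have hdistEq : distNum ι = sInf dS := rfl
  have hdmem : distNum ι ∈ dS := by rw [hdistEq]; exact csInf_mem hdSne
  have hgmem : distNum ι ∈ gS := by
    obtain ⟨I, D, h1, h2, h3⟩ := hdmem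
    exact HGame.denseToGame _ I D h1 h2 h3
  have hsub : gS ⊆ dS := by
    rintro κ ⟨σ, hσ⟩
    obtain ⟨I, D, h1, h2, h3⟩ := HGame.gameToDense κ σ hσ
    exact ⟨I, D, h1, h2, h3⟩
  show distNum ι = sInf gS
  apply le_antisymm
  · exact le_csInf ⟨_, hgmem⟩ (fun b hb => csInf_le (OrderBot.bddBelow _) (hsub hb))
  · exact csInf_le (OrderBot.bddBelow _) hgmem
end

section
/- Suppose D₁ and D₂ are Ramsey ultrafilters on ℕ which are not Rudin–Keisler equivalent. Then in the game G(D₁, D₂) player I has no winning strategy: for every strategy σ of player I there exists a run consistent with σ in which player II keeps the rules and, writing k₀, k₁, k₂, … for player II's moves, the set {k_{2i} : i < ω} belongs to D₁ and the set {k_{2i+1} : i < ω} belongs to D₂. -/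
open Set

/-- A Ramsey ultrafilter on `ℕ`: a nonprincipal ultrafilter such that every
colouring of the `n`-element subsets of `ℕ` with `k` colours has a homogeneous
set in the ultrafilter. -/
def IsRamseyUF (D : Ultrafilter ℕ) : Prop :=
  (∀ m : ℕ, ({m} : Set ℕ) ∉ D) ∧
    ∀ (n k : ℕ) (F : Finset ℕ → Fin k), ∃ H : Set ℕ, H ∈ D ∧
      ∀ s t : Finset ℕ, (s : Set ℕ) ⊆ H → (t : Set ℕ) ⊆ H →
        s.card = n → t.card = n → F s = F t

/-- The Rudin–Keisler order: `D ≤_RK U` iff `D` is the projection of `U` along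
some `f : ℕ → ℕ`, i.e. `D = { X : f⁻¹[X] ∈ U }`. -/
def RKle (D U : Ultrafilter ℕ) : Prop :=
  ∃ f : ℕ → ℕ, ∀ X : Set ℕ, X ∈ D ↔ f ⁻¹' X ∈ U

/-- Rudin–Keisler equivalence of ultrafilters. -/
def RKequiv (D U : Ultrafilter ℕ) : Prop :=
  RKle D U ∧ RKle U D

namespace PlayerINoWin

/- ## Generalities about nonprincipal ultrafilters -/

lemma finite_not_mem (D : Ultrafilter ℕ) (hD : ∀ m : ℕ, ({m} : Set ℕ) ∉ D)
    {T : Set ℕ} (hT : T.Finite) : T ∉ D := by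
  refine Set.Finite.induction_on (motive := fun s _ => s ∉ D) T hT ?_ ?_
  · show (∅ : Set ℕ) ∉ D
    simpa using Filter.empty_not_mem (D : Filter ℕ)
  · intro a T _ _ ih h
    rw [Set.insert_eq, Ultrafilter.union_mem_iff] at h
    exact h.elim (hD a) ih

lemma infinite_of_mem (D : Ultrafilter ℕ) (hD : ∀ m : ℕ, ({m} : Set ℕ) ∉ D)
    {T : Set ℕ} (hT : T ∈ D) : T.Infinite := by
  by_contra h
  rw [Set.not_infinite] at h
  exact finite_not_mem D hD h hT

lemma cofinite_mem (D : Ultrafilter ℕ) (hD : ∀ m : ℕ, ({m} : Set ℕ) ∉ D)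
    {T : Set ℕ} (hT : Tᶜ.Finite) : T ∈ D := by
  have := finite_not_mem D hD hT
  rwa [Ultrafilter.compl_mem_iff_notMem, not_not] at this

lemma exists_gt_mem (D : Ultrafilter ℕ) (hD : ∀ m : ℕ, ({m} : Set ℕ) ∉ D)
    {T : Set ℕ} (hT : T ∈ D) (b : ℕ) : ∃ x ∈ T, b < x :=
  (infinite_of_mem D hD hT).exists_gt b

lemma mem_congr_on (D : Ultrafilter ℕ) (W : Set ℕ) (hW : W ∈ D) {S T : Set ℕ}
    (h : ∀ x ∈ W, x ∈ S ↔ x ∈ T) : S ∈ D ↔ T ∈ D := by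
  constructor
  · intro hS
    exact Filter.mem_of_superset (Filter.inter_mem hW hS) (fun x hx => (h x hx.1).1 hx.2)
  · intro hT
    exact Filter.mem_of_superset (Filter.inter_mem hW hT) (fun x hx => (h x hx.1).2 hx.2)

/- ## Ramsey consequences -/

lemma pair_ramsey (D : Ultrafilter ℕ) (hD : IsRamseyUF D) (P : ℕ → ℕ → Prop) :
    ∃ H, H ∈ D ∧ ((∀ x ∈ H, ∀ y ∈ H, x < y → P x y) ∨ (∀ x ∈ H, ∀ y ∈ H, x < y → ¬ P x y)) := by
  classical
  obtain ⟨H, hH, hhom⟩ := hD.2 2 2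
    (fun s => if ∃ a ∈ s, ∃ b ∈ s, a < b ∧ P a b then 1 else 0)
  have hval : ∀ x y : ℕ, x < y →
      ((∃ a ∈ ({x, y} : Finset ℕ), ∃ b ∈ ({x, y} : Finset ℕ), a < b ∧ P a b) ↔ P x y) := by
    intro x y hxy
    constructor
    · rintro ⟨a, ha, b, hb, hab, hP⟩
      simp only [Finset.mem_insert, Finset.mem_singleton] at ha hb
      rcases ha with rfl | rfl <;> rcases hb with rfl | rfl <;> first | omega | exact hP
    · intro hP
      exact ⟨x, by simp, y, by simp, hxy, hP⟩
  have hsub : ∀ x ∈ H, ∀ y ∈ H, ((({x, y} : Finset ℕ) : Set ℕ) ⊆ H) := by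
    intro x hx y hy z hz
    simp only [Finset.coe_insert, Finset.coe_singleton, Set.mem_insert_iff,
      Set.mem_singleton_iff] at hz
    rcases hz with rfl | rfl <;> assumption
  have hcard : ∀ x y : ℕ, x < y → ({x, y} : Finset ℕ).card = 2 := by
    intro x y hxy; rw [Finset.card_pair (by omega)]
  have key : ∀ x ∈ H, ∀ y ∈ H, ∀ x' ∈ H, ∀ y' ∈ H, x < y → x' < y' → P x y → P x' y' := by
    intro x hx y hy x' hx' y' hy' hxy hxy' hP
    have := hhom {x, y} {x', y'} (hsub x hx y hy) (hsub x' hx' y' hy')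
      (hcard x y hxy) (hcard x' y' hxy')
    by_contra hP'
    rw [if_pos ((hval x y hxy).2 hP), if_neg (fun hc => hP' ((hval x' y' hxy').1 hc))] at this
    exact one_ne_zero this
  refine ⟨H, hH, ?_⟩
  by_cases hex : ∃ x ∈ H, ∃ y ∈ H, x < y ∧ P x y
  · obtain ⟨x₀, hx₀, y₀, hy₀, hlt₀, hP₀⟩ := hex
    exact Or.inl fun x hx y hy hxy => key x₀ hx₀ y₀ hy₀ x hx y hy hlt₀ hxy hP₀
  · push_neg at hex
    exact Or.inr fun x hx y hy hxy hP => hex x hx y hy hxy hP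

lemma inj_on_mem (D : Ultrafilter ℕ) (hD : IsRamseyUF D) (g : ℕ → ℕ)
    (hfo : ∀ n : ℕ, {z : ℕ | g z = n}.Finite) :
    ∃ H, H ∈ D ∧ ∀ x ∈ H, ∀ y ∈ H, x ≠ y → g x ≠ g y := by
  obtain ⟨H, hH, hhom⟩ := pair_ramsey D hD (fun x y => g x = g y)
  rcases hhom with hpos | hneg
  · exfalso
    obtain ⟨x₀, hx₀⟩ := (infinite_of_mem D hD.1 hH).nonempty
    have hsub : H ⊆ {z : ℕ | g z = g x₀} := by
      intro y hy
      simp only [Set.mem_setOf_eq]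
      rcases lt_trichotomy y x₀ with h | h | h
      · exact hpos y hy x₀ hx₀ h
      · rw [h]
      · exact (hpos x₀ hx₀ y hy h).symm
    exact finite_not_mem D hD.1 ((hfo (g x₀)).subset hsub) hH
  · refine ⟨H, hH, fun x hx y hy hne => ?_⟩
    rcases lt_trichotomy x y with h | h | h
    · exact hneg x hx y hy h
    · exact absurd h hne
    · exact fun hc => hneg y hy x hx h hc.symm

lemma diag_mem (D : Ultrafilter ℕ) (hD : IsRamseyUF D) (As : ℕ → Set ℕ)
    (hAs : ∀ t, As t ∈ D) :
    ∃ H, H ∈ D ∧ ∀ x ∈ H, ∀ y ∈ H, x < y → y ∈ As x := by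
  obtain ⟨H, hH, hhom⟩ := pair_ramsey D hD (fun x y => y ∈ As x)
  rcases hhom with hpos | hneg
  · exact ⟨H, hH, hpos⟩
  · exfalso
    obtain ⟨x₀, hx₀⟩ := (infinite_of_mem D hD.1 hH).nonempty
    obtain ⟨y, hy, hxy⟩ := exists_gt_mem D hD.1 (Filter.inter_mem hH (hAs x₀)) x₀
    exact hneg x₀ hx₀ y hy.1 hxy hy.2

lemma pushforward_ne (D₁ D₂ : Ultrafilter ℕ) (h1 : IsRamseyUF D₁) (h2 : IsRamseyUF D₂)
    (hne : ¬ RKequiv D₁ D₂) (h : ℕ → ℕ) (hfo : ∀ n : ℕ, {z : ℕ | h z = n}.Finite) :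
    ∃ U, U ∈ D₁ ∧ ∃ V, V ∈ D₂ ∧ ∀ u ∈ U, ∀ v ∈ V, h u ≠ h v := by
  classical
  by_contra hcon
  push_neg at hcon
  have trans1 : ∀ S : Set ℕ, h ⁻¹' S ∈ D₁ → h ⁻¹' S ∈ D₂ := by
    intro S hS
    by_contra hS2
    have hS2' : h ⁻¹' Sᶜ ∈ D₂ := by
      rw [Set.preimage_compl, Ultrafilter.compl_mem_iff_notMem]; exact hS2
    obtain ⟨u, hu, v, hv, huv⟩ := hcon _ hS _ hS2'
    exact hv (huv ▸ hu)
  have trans : ∀ S : Set ℕ, h ⁻¹' S ∈ D₁ ↔ h ⁻¹' S ∈ D₂ := by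
    intro S
    refine ⟨trans1 S, fun hS => ?_⟩
    by_contra hS1
    have : h ⁻¹' Sᶜ ∈ D₂ := trans1 Sᶜ (by
      rw [Set.preimage_compl, Ultrafilter.compl_mem_iff_notMem]; exact hS1)
    rw [Set.preimage_compl, Ultrafilter.compl_mem_iff_notMem] at this
    exact this hS
  obtain ⟨X₁, hX₁, hinj₁⟩ := inj_on_mem D₁ h1 h hfo
  obtain ⟨X₂, hX₂, hinj₂⟩ := inj_on_mem D₂ h2 h hfo
  have mkr : ∀ X : Set ℕ, (∀ x ∈ X, ∀ y ∈ X, x ≠ y → h x ≠ h y) →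
      ∃ r : ℕ → ℕ, ∀ x ∈ X, r (h x) = x := by
    intro X hinj
    refine ⟨fun n => if hn : ∃ x, x ∈ X ∧ h x = n then hn.choose else 0, fun x hx => ?_⟩
    have hn : ∃ x' ∈ X, h x' = h x := ⟨x, hx, rfl⟩
    show (if hn : ∃ x' ∈ X, h x' = h x then hn.choose else 0) = x
    rw [dif_pos hn]
    by_contra hne'
    exact hinj _ hn.choose_spec.1 x hx hne' hn.choose_spec.2
  obtain ⟨r₁, hr₁⟩ := mkr X₁ hinj₁
  obtain ⟨r₂, hr₂⟩ := mkr X₂ hinj₂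
  apply hne
  constructor
  · refine ⟨r₁ ∘ h, fun Z => ?_⟩
    have e1 : Z ∈ D₁ ↔ (r₁ ∘ h) ⁻¹' Z ∈ D₁ :=
      mem_congr_on D₁ X₁ hX₁ (fun x hx => by simp [Set.mem_preimage, hr₁ x hx])
    rw [e1, Set.preimage_comp]
    exact trans (r₁ ⁻¹' Z)
  · refine ⟨r₂ ∘ h, fun Z => ?_⟩
    have e1 : Z ∈ D₂ ↔ (r₂ ∘ h) ⁻¹' Z ∈ D₂ :=
      mem_congr_on D₂ X₂ hX₂ (fun x hx => by simp [Set.mem_preimage, hr₂ x hx])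
    rw [e1, Set.preimage_comp, ← trans (r₂ ⁻¹' Z)]

/- ## Combinatorial helpers -/

def exactL (t : ℕ) : ℕ → List (List ℕ)
  | 0 => [[]]
  | n+1 => (List.range (t+1)).flatMap fun x => (exactL t n).map (x :: ·)

lemma mem_exactL {t : ℕ} : ∀ {l : List ℕ}, (∀ x ∈ l, x ≤ t) → l ∈ exactL t l.length := by
  intro l
  induction l with
  | nil => intro _; simp [exactL]
  | cons x l ih =>
      intro hb
      simp only [List.length_cons, exactL, List.mem_flatMap, List.mem_map, List.mem_range]
      exact ⟨x, by have := hb x (by simp); omega,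
        l, ih (fun y hy => hb y (by simp [hy])), rfl⟩

lemma iInter_list_mem (D : Ultrafilter ℕ) (A : List ℕ → Set ℕ) (hA : ∀ l, A l ∈ D) :
    ∀ L : List (List ℕ), {z : ℕ | ∀ l ∈ L, z ∈ A l} ∈ D := by
  intro L
  induction L with
  | nil =>
      have : {z : ℕ | ∀ l ∈ ([] : List (List ℕ)), z ∈ A l} = Set.univ := by ext z; simp
      rw [this]; exact Filter.univ_mem
  | cons l L ih =>
      have : {z : ℕ | ∀ l' ∈ l :: L, z ∈ A l'} = A l ∩ {z : ℕ | ∀ l' ∈ L, z ∈ A l'} := by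
        ext z; simp [Set.mem_inter_iff]
      rw [this]
      exact Filter.inter_mem (hA l) ih

def itv (G : ℕ → ℕ) : ℕ → ℕ
  | 0 => 0
  | k+1 => itv G k + G (itv G k) + 1

lemma itv_strictMono (G : ℕ → ℕ) : StrictMono (itv G) :=
  strictMono_nat_of_lt_succ (fun k => by simp [itv])

lemma itv_ge (G : ℕ → ℕ) : ∀ k, k ≤ itv G k := by
  intro k
  induction k with
  | zero => omega
  | succ k ih => simp [itv]; omega

lemma foldr_max_le {l : List ℕ} {b : ℕ} (h : ∀ v ∈ l, v ≤ b) : l.foldr max 0 ≤ b := by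
  induction l with
  | nil => simp
  | cons x l ih =>
      simp only [List.foldr_cons, max_le_iff]
      exact ⟨h x (by simp), ih (fun v hv => h v (by simp [hv]))⟩

lemma le_foldr_max {l : List ℕ} {v : ℕ} (h : v ∈ l) : v ≤ l.foldr max 0 := by
  induction l with
  | nil => simp at h
  | cons x l ih =>
      simp only [List.foldr_cons]
      rcases List.mem_cons.1 h with rfl | h'
      · exact le_max_left _ _
      · exact le_trans (ih h') (le_max_right _ _)

lemma div2_sep {p q : ℕ} (h1 : p/2 ≠ q/2) (h2 : (p+1)/2 ≠ (q+1)/2) :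
    p + 2 ≤ q ∨ q + 2 ≤ p := by omega

end PlayerINoWin


open PlayerINoWin in
set_option maxHeartbeats 1000000 in
/-- If `D₁, D₂` are Ramsey ultrafilters that are not RK-equivalent, then player I
has no winning strategy in the game `G(D₁, D₂)`: for every strategy `σ` of
player I (a function assigning to each finite sequence of player II's previous
moves a pair in `D₁ × D₂`) there is a sequence `k` of moves of player II that
keeps the rules (`k n` lies in the first component of I's move when `n` is even,
in the second when `n` is odd) and wins, i.e. `{k 2i : i < ω} ∈ D₁` and
`{k (2i+1) : i < ω} ∈ D₂`. -/
theorem playerI_no_winning_strategy (D₁ D₂ : Ultrafilter ℕ)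
    (h1 : IsRamseyUF D₁) (h2 : IsRamseyUF D₂) (hne : ¬ RKequiv D₁ D₂)
    (σ : List ℕ → Set ℕ × Set ℕ)
    (hσ : ∀ l : List ℕ, (σ l).1 ∈ D₁ ∧ (σ l).2 ∈ D₂) :
    ∃ k : ℕ → ℕ,
      (∀ n : ℕ,
        (Even n → k n ∈ (σ ((List.range n).map k)).1) ∧
        (¬ Even n → k n ∈ (σ ((List.range n).map k)).2)) ∧
      {m | ∃ i : ℕ, k (2 * i) = m} ∈ D₁ ∧
      {m | ∃ i : ℕ, k (2 * i + 1) = m} ∈ D₂ := by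
  classical
  obtain ⟨A, hA_eq⟩ : ∃ A : List ℕ → Set ℕ, ∀ l, A l = (σ l).1 := ⟨_, fun l => rfl⟩
  obtain ⟨B, hB_eq⟩ : ∃ B : List ℕ → Set ℕ, ∀ l, B l = (σ l).2 := ⟨_, fun l => rfl⟩
  have hA : ∀ l, A l ∈ D₁ := fun l => by rw [hA_eq]; exact (hσ l).1
  have hB : ∀ l, B l ∈ D₂ := fun l => by rw [hB_eq]; exact (hσ l).2
  -- star sets: intersections of strategy moves over short low histories
  obtain ⟨Astar, hAstar_iff⟩ : ∃ f : ℕ → Set ℕ, ∀ t w,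
      w ∈ f t ↔ ∀ l : List ℕ, l.length ≤ t → (∀ x ∈ l, x ≤ t) → w ∈ A l :=
    ⟨fun t => {w | ∀ l : List ℕ, l.length ≤ t → (∀ x ∈ l, x ≤ t) → w ∈ A l},
      fun t w => Iff.rfl⟩
  obtain ⟨Bstar, hBstar_iff⟩ : ∃ f : ℕ → Set ℕ, ∀ t w,
      w ∈ f t ↔ ∀ l : List ℕ, l.length ≤ t → (∀ x ∈ l, x ≤ t) → w ∈ B l :=
    ⟨fun t => {w | ∀ l : List ℕ, l.length ≤ t → (∀ x ∈ l, x ≤ t) → w ∈ B l},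
      fun t w => Iff.rfl⟩
  have hAstar_mem : ∀ t, Astar t ∈ D₁ := by
    intro t
    refine Filter.mem_of_superset
      (iInter_list_mem D₁ A hA ((List.range (t+1)).flatMap (exactL t))) ?_
    intro w hw
    rw [hAstar_iff]
    intro l hlen hb
    refine hw l ?_
    simp only [List.mem_flatMap, List.mem_range]
    exact ⟨l.length, by omega, mem_exactL hb⟩
  have hBstar_mem : ∀ t, Bstar t ∈ D₂ := by
    intro t
    refine Filter.mem_of_superset
      (iInter_list_mem D₂ B hB ((List.range (t+1)).flatMap (exactL t))) ?_
    intro w hw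
    rw [hBstar_iff]
    intro l hlen hb
    refine hw l ?_
    simp only [List.mem_flatMap, List.mem_range]
    exact ⟨l.length, by omega, mem_exactL hb⟩
  have hAstar_anti : ∀ {u t : ℕ}, u ≤ t → Astar t ⊆ Astar u := by
    intro u t hut w hw
    rw [hAstar_iff] at hw ⊢
    intro l hlen hb
    exact hw l (le_trans hlen hut) (fun x hx => le_trans (hb x hx) hut)
  have hBstar_anti : ∀ {u t : ℕ}, u ≤ t → Bstar t ⊆ Bstar u := by
    intro u t hut w hw
    rw [hBstar_iff] at hw ⊢
    intro l hlen hb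
    exact hw l (le_trans hlen hut) (fun x hx => le_trans (hb x hx) hut)
  -- diagonal sets
  obtain ⟨X₀, hX₀, hdiagX⟩ := diag_mem D₁ h1 Astar hAstar_mem
  obtain ⟨Y₀, hY₀, hdiagY⟩ := diag_mem D₂ h2 Bstar hBstar_mem
  choose e₁ he₁X he₁gt using fun t => exists_gt_mem D₁ h1.1 hX₀ t
  choose e₂ he₂Y he₂gt using fun t => exists_gt_mem D₂ h2.1 hY₀ t
  -- a monotone growth function controlling everything
  obtain ⟨W, hW_eq⟩ : ∃ W : ℕ → ℕ, ∀ t, W t = (Finset.range (t+1)).sup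
      (fun u => max (2*u+4) (max (e₁ u) (max (e₂ u) (max (e₁ (e₁ u)) (e₂ (e₂ u)))))) :=
    ⟨fun t => (Finset.range (t+1)).sup
      (fun u => max (2*u+4) (max (e₁ u) (max (e₂ u) (max (e₁ (e₁ u)) (e₂ (e₂ u)))))),
      fun t => rfl⟩
  have hW_raw : ∀ t, max (2*t+4) (max (e₁ t) (max (e₂ t) (max (e₁ (e₁ t)) (e₂ (e₂ t))))) ≤ W t :=
    fun t => by
      rw [hW_eq]
      exact Finset.le_sup (f := fun u => max (2*u+4)
        (max (e₁ u) (max (e₂ u) (max (e₁ (e₁ u)) (e₂ (e₂ u))))))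
        (Finset.self_mem_range_succ t)
  have hW_mono : Monotone W := by
    intro u t hut
    rw [hW_eq, hW_eq]
    exact Finset.sup_mono (Finset.range_subset_range.2 (by omega))
  have hW_big : ∀ t, 2*t+4 ≤ W t := fun t => le_trans (le_max_left _ _) (hW_raw t)
  have hW_gt : ∀ t, t < W t := fun t => by have := hW_big t; omega
  have hW_e₁ : ∀ t, e₁ t ≤ W t :=
    fun t => le_trans (le_trans (le_max_left _ _) (le_max_right _ _)) (hW_raw t)
  have hW_e₂ : ∀ t, e₂ t ≤ W t :=
    fun t => le_trans (le_trans (le_trans (le_max_left _ _) (le_max_right _ _))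
      (le_max_right _ _)) (hW_raw t)
  have hW_e₁e₁ : ∀ t, e₁ (e₁ t) ≤ W t :=
    fun t => le_trans (le_trans (le_trans (le_trans (le_max_left _ _) (le_max_right _ _))
      (le_max_right _ _)) (le_max_right _ _)) (hW_raw t)
  have hW_e₂e₂ : ∀ t, e₂ (e₂ t) ≤ W t :=
    fun t => le_trans (le_trans (le_trans (le_trans (le_max_right _ _) (le_max_right _ _))
      (le_max_right _ _)) (le_max_right _ _)) (hW_raw t)
  -- entering the star sets above the W-threshold
  have key1 : ∀ t w, w ∈ X₀ → W t < w → w ∈ Astar t := by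
    intro t w hw hlt
    exact hAstar_anti (le_of_lt (he₁gt t))
      (hdiagX (e₁ t) (he₁X t) w hw (lt_of_le_of_lt (hW_e₁ t) hlt))
  have key1' : ∀ t w, w ∈ Y₀ → W t < w → w ∈ Bstar t := by
    intro t w hw hlt
    exact hBstar_anti (le_of_lt (he₂gt t))
      (hdiagY (e₂ t) (he₂Y t) w hw (lt_of_le_of_lt (hW_e₂ t) hlt))
  have key2 : ∀ t, e₁ (e₁ t) ∈ Astar t :=
    fun t => hAstar_anti (le_of_lt (he₁gt t))
      (hdiagX (e₁ t) (he₁X t) _ (he₁X (e₁ t)) (he₁gt (e₁ t)))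
  have key2' : ∀ t, e₂ (e₂ t) ∈ Bstar t :=
    fun t => hBstar_anti (le_of_lt (he₂gt t))
      (hdiagY (e₂ t) (he₂Y t) _ (he₂Y (e₂ t)) (he₂gt (e₂ t)))
  obtain ⟨G, hG_eq⟩ : ∃ G : ℕ → ℕ, ∀ t, G t = W (W (W t)) := ⟨_, fun t => rfl⟩
  have hG_mono : Monotone G := by
    intro u t hut
    rw [hG_eq, hG_eq]
    exact hW_mono (hW_mono (hW_mono hut))
  have hG_gt : ∀ t, t < G t := by
    intro t
    rw [hG_eq]
    exact lt_trans (lt_trans (hW_gt t) (hW_gt (W t))) (hW_gt (W (W t)))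
  -- interval decomposition
  obtain ⟨c, hc_eq⟩ : ∃ c : ℕ → ℕ, ∀ w, c w = Nat.findGreatest (fun j => itv G j ≤ w) w :=
    ⟨_, fun w => rfl⟩
  have hc1 : ∀ w, itv G (c w) ≤ w := by
    intro w
    rw [hc_eq]
    exact Nat.findGreatest_spec (P := fun j => itv G j ≤ w) (Nat.zero_le w) (Nat.zero_le w)
  have hc2 : ∀ w, w < itv G (c w + 1) := by
    intro w
    by_contra hcon
    push_neg at hcon
    have h' : c w + 1 ≤ w := le_trans (itv_ge G (c w + 1)) hcon
    have h2 := Nat.le_findGreatest (P := fun j => itv G j ≤ w) h' hcon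
    rw [← hc_eq] at h2
    omega
  obtain ⟨g₁, hg₁_eq⟩ : ∃ g : ℕ → ℕ, ∀ w, g w = c w / 2 := ⟨_, fun w => rfl⟩
  obtain ⟨g₂, hg₂_eq⟩ : ∃ g : ℕ → ℕ, ∀ w, g w = (c w + 1) / 2 := ⟨_, fun w => rfl⟩
  have hfo₁ : ∀ n, {w : ℕ | g₁ w = n}.Finite := by
    intro n
    refine Set.Finite.subset (Set.finite_Iio (itv G (2*n+2))) ?_
    intro w hw
    simp only [Set.mem_setOf_eq, hg₁_eq] at hw
    have hcw : c w + 1 ≤ 2*n+2 := by omega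
    exact lt_of_lt_of_le (hc2 w) ((itv_strictMono G).monotone hcw)
  have hfo₂ : ∀ n, {w : ℕ | g₂ w = n}.Finite := by
    intro n
    refine Set.Finite.subset (Set.finite_Iio (itv G (2*n+1))) ?_
    intro w hw
    simp only [Set.mem_setOf_eq, hg₂_eq] at hw
    have hcw : c w + 1 ≤ 2*n+1 := by omega
    exact lt_of_lt_of_le (hc2 w) ((itv_strictMono G).monotone hcw)
  obtain ⟨U₁, hU₁, V₁, hV₁, hUV₁⟩ := pushforward_ne D₁ D₂ h1 h2 hne g₁ hfo₁
  obtain ⟨U₂, hU₂, V₂, hV₂, hUV₂⟩ := pushforward_ne D₁ D₂ h1 h2 hne g₂ hfo₂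
  obtain ⟨I₁, hI₁, hinjX₁⟩ := inj_on_mem D₁ h1 g₁ hfo₁
  obtain ⟨I₂, hI₂, hinjX₂⟩ := inj_on_mem D₁ h1 g₂ hfo₂
  obtain ⟨J₁, hJ₁, hinjY₁⟩ := inj_on_mem D₂ h2 g₁ hfo₁
  obtain ⟨J₂, hJ₂, hinjY₂⟩ := inj_on_mem D₂ h2 g₂ hfo₂
  have htail1 : {w : ℕ | G 0 < w} ∈ D₁ := by
    refine cofinite_mem D₁ h1.1 (Set.Finite.subset (Set.finite_Iic (G 0)) ?_)
    intro w hw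
    simp only [Set.mem_compl_iff, Set.mem_setOf_eq, not_lt] at hw
    exact hw
  have htail2 : {w : ℕ | G 0 < w} ∈ D₂ := by
    refine cofinite_mem D₂ h2.1 (Set.Finite.subset (Set.finite_Iic (G 0)) ?_)
    intro w hw
    simp only [Set.mem_compl_iff, Set.mem_setOf_eq, not_lt] at hw
    exact hw
  obtain ⟨X, hX_eq⟩ : ∃ X : Set ℕ, X = X₀ ∩ U₁ ∩ U₂ ∩ I₁ ∩ I₂ ∩ {w | G 0 < w} := ⟨_, rfl⟩
  obtain ⟨Y, hY_eq⟩ : ∃ Y : Set ℕ, Y = Y₀ ∩ V₁ ∩ V₂ ∩ J₁ ∩ J₂ ∩ {w | G 0 < w} := ⟨_, rfl⟩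
  have hX : X ∈ D₁ := by
    rw [hX_eq]
    exact Filter.inter_mem (Filter.inter_mem (Filter.inter_mem (Filter.inter_mem
      (Filter.inter_mem hX₀ hU₁) hU₂) hI₁) hI₂) htail1
  have hY : Y ∈ D₂ := by
    rw [hY_eq]
    exact Filter.inter_mem (Filter.inter_mem (Filter.inter_mem (Filter.inter_mem
      (Filter.inter_mem hY₀ hV₁) hV₂) hJ₁) hJ₂) htail2
  have hXmem : ∀ w, w ∈ X →
      w ∈ X₀ ∧ w ∈ U₁ ∧ w ∈ U₂ ∧ w ∈ I₁ ∧ w ∈ I₂ ∧ G 0 < w := by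
    intro w hw
    rw [hX_eq] at hw
    exact ⟨hw.1.1.1.1.1, hw.1.1.1.1.2, hw.1.1.1.2, hw.1.1.2, hw.1.2, hw.2⟩
  have hYmem : ∀ w, w ∈ Y →
      w ∈ Y₀ ∧ w ∈ V₁ ∧ w ∈ V₂ ∧ w ∈ J₁ ∧ w ∈ J₂ ∧ G 0 < w := by
    intro w hw
    rw [hY_eq] at hw
    exact ⟨hw.1.1.1.1.1, hw.1.1.1.1.2, hw.1.1.1.2, hw.1.1.2, hw.1.2, hw.2⟩
  have hXX₀ : ∀ w, w ∈ X → w ∈ X₀ := fun w hw => (hXmem w hw).1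
  have hYY₀ : ∀ w, w ∈ Y → w ∈ Y₀ := fun w hw => (hYmem w hw).1
  -- the union of X and Y is very spread out
  have SEP : ∀ w ∈ X ∪ Y, ∀ w' ∈ X ∪ Y, w < w' → G w < w' := by
    intro w hw w' hw' hlt
    have hne1 : c w / 2 ≠ c w' / 2 := by
      rw [← hg₁_eq, ← hg₁_eq]
      rcases hw with hw | hw <;> rcases hw' with hw' | hw'
      · exact hinjX₁ w (hXmem w hw).2.2.2.1 w' (hXmem w' hw').2.2.2.1 (by omega)
      · exact hUV₁ w (hXmem w hw).2.1 w' (hYmem w' hw').2.1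
      · exact (hUV₁ w' (hXmem w' hw').2.1 w (hYmem w hw).2.1).symm
      · exact hinjY₁ w (hYmem w hw).2.2.2.1 w' (hYmem w' hw').2.2.2.1 (by omega)
    have hne2 : (c w + 1) / 2 ≠ (c w' + 1) / 2 := by
      rw [← hg₂_eq, ← hg₂_eq]
      rcases hw with hw | hw <;> rcases hw' with hw' | hw'
      · exact hinjX₂ w (hXmem w hw).2.2.2.2.1 w' (hXmem w' hw').2.2.2.2.1 (by omega)
      · exact hUV₂ w (hXmem w hw).2.2.1 w' (hYmem w' hw').2.2.1
      · exact (hUV₂ w' (hXmem w' hw').2.2.1 w (hYmem w hw).2.2.1).symm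
      · exact hinjY₂ w (hYmem w hw).2.2.2.2.1 w' (hYmem w' hw').2.2.2.2.1 (by omega)
    rcases div2_sep hne1 hne2 with hsep | hsep
    · have h3 : itv G (c w + 2) ≤ w' := le_trans ((itv_strictMono G).monotone hsep) (hc1 w')
      have h4 : itv G (c w + 1) + G (itv G (c w + 1)) + 1 = itv G (c w + 2) := rfl
      have h5 : G w ≤ G (itv G (c w + 1)) := hG_mono (le_of_lt (hc2 w))
      omega
    · exfalso
      have h3 : itv G (c w' + 2) ≤ w := le_trans ((itv_strictMono G).monotone hsep) (hc1 w)
      have h4 : itv G (c w' + 1) + G (itv G (c w' + 1)) + 1 = itv G (c w' + 2) := rfl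
      have h5 : G w' ≤ G (itv G (c w' + 1)) := hG_mono (le_of_lt (hc2 w'))
      have h6 := hG_gt w'
      omega
  have MIN : ∀ w ∈ X ∪ Y, G 0 < w := by
    rintro w (hw | hw)
    · exact (hXmem w hw).2.2.2.2.2
    · exact (hYmem w hw).2.2.2.2.2
  have hXYdisj : ∀ w, w ∈ X → w ∈ Y → False := by
    intro w hw1 hw2
    exact hUV₁ w (hXmem w hw1).2.1 w (hYmem w hw2).2.1 rfl
  -- enumerate X ∪ Y in increasing order
  have hPinf : (setOf (fun n => n ∈ X ∪ Y)).Infinite :=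
    (infinite_of_mem D₁ h1.1 hX).mono (fun x hx => Or.inl hx)
  obtain ⟨z, hz_eq⟩ : ∃ z : ℕ → ℕ, ∀ j, z j = Nat.nth (fun n => n ∈ X ∪ Y) j :=
    ⟨_, fun j => rfl⟩
  have hzmem : ∀ j, z j ∈ X ∪ Y := by
    intro j; rw [hz_eq]; exact Nat.nth_mem_of_infinite hPinf j
  have hzmono : ∀ {i j : ℕ}, i < j → z i < z j := by
    intro i j hij
    rw [hz_eq, hz_eq]
    exact Nat.nth_strictMono hPinf hij
  have hzge : ∀ j, j ≤ z j := by
    intro j; rw [hz_eq]; exact (Nat.nth_strictMono hPinf).le_apply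
  have hzcover : ∀ x, x ∈ X ∪ Y → ∃ j, z j = x := by
    intro x hx
    exact ⟨Nat.count (fun n => n ∈ X ∪ Y) x, by rw [hz_eq]; exact Nat.nth_count hx⟩
  have hzsep : ∀ j, G (z j) < z (j+1) :=
    fun j => SEP _ (hzmem j) _ (hzmem (j+1)) (hzmono (Nat.lt_succ_self j))
  have hz0 : G 0 < z 0 := MIN _ (hzmem 0)
  -- history bookkeeping
  obtain ⟨tau, htau_eq⟩ : ∃ tau : List ℕ → ℕ, ∀ l, tau l = max (l.foldr max 0) l.length :=
    ⟨_, fun l => rfl⟩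
  have htau_len : ∀ l : List ℕ, l.length ≤ tau l := by
    intro l; rw [htau_eq]; exact le_max_right _ _
  have htau_ent : ∀ (l : List ℕ) v, v ∈ l → v ≤ tau l := by
    intro l v hv; rw [htau_eq]; exact le_trans (le_foldr_max hv) (le_max_left _ _)
  have htau_le : ∀ (l : List ℕ) b, (∀ v ∈ l, v ≤ b) → l.length ≤ b → tau l ≤ b := by
    intro l b hb hlen; rw [htau_eq]; exact max_le (foldr_max_le hb) hlen
  obtain ⟨pad, hpad_eq⟩ : ∃ pad : List ℕ → ℕ, ∀ l,
      pad l = if Even l.length then e₁ (e₁ (tau l)) else e₂ (e₂ (tau l)) :=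
    ⟨_, fun l => rfl⟩
  have hpad_even : ∀ l : List ℕ, Even l.length → pad l = e₁ (e₁ (tau l)) := by
    intro l hev; rw [hpad_eq, if_pos hev]
  have hpad_odd : ∀ l : List ℕ, ¬ Even l.length → pad l = e₂ (e₂ (tau l)) := by
    intro l hev; rw [hpad_eq, if_neg hev]
  obtain ⟨s, hs0, hsS⟩ : ∃ s : ℕ → List ℕ, s 0 = [] ∧ ∀ j,
      s (j+1) = s j ++ (if (Even (s j).length ↔ z j ∈ X) then [z j] else [pad (s j), z j]) :=
    ⟨fun j => Nat.rec [] (fun j' prev =>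
      prev ++ (if (Even prev.length ↔ z j' ∈ X) then [z j'] else [pad prev, z j'])) j,
     rfl, fun j => rfl⟩
  have hsS_pos : ∀ j, (Even (s j).length ↔ z j ∈ X) → s (j+1) = s j ++ [z j] := by
    intro j hm; rw [hsS j, if_pos hm]
  have hsS_neg : ∀ j, ¬ (Even (s j).length ↔ z j ∈ X) →
      s (j+1) = s j ++ [pad (s j), z j] := by
    intro j hm; rw [hsS j, if_neg hm]
  obtain ⟨V, hV0, hVS⟩ : ∃ V : ℕ → ℕ, V 0 = 0 ∧ ∀ j, V (j+1) = z j :=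
    ⟨fun j => Nat.casesOn j 0 (fun j' => z j'), rfl, fun j => rfl⟩
  have hVz : ∀ j, G (V j) < z j := by
    intro j
    cases j with
    | zero => rw [hV0]; exact hz0
    | succ j' => rw [hVS]; exact hzsep j'
  have hVle : ∀ j, V j ≤ z j := by
    intro j
    cases j with
    | zero => rw [hV0]; exact Nat.zero_le _
    | succ j' => rw [hVS]; exact le_of_lt (hzmono (Nat.lt_succ_self j'))
  -- legality of values above the threshold
  have hAstar_l : ∀ l : List ℕ, ∀ w, w ∈ Astar (tau l) → w ∈ A l := by
    intro l w hw
    rw [hAstar_iff] at hw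
    exact hw l (htau_len l) (fun x hx => htau_ent l x hx)
  have hBstar_l : ∀ l : List ℕ, ∀ w, w ∈ Bstar (tau l) → w ∈ B l := by
    intro l w hw
    rw [hBstar_iff] at hw
    exact hw l (htau_len l) (fun x hx => htau_ent l x hx)
  have playA : ∀ (l : List ℕ) w, w ∈ X₀ → W (tau l) < w → w ∈ A l :=
    fun l w hw hlt => hAstar_l l w (key1 (tau l) w hw hlt)
  have playB : ∀ (l : List ℕ) w, w ∈ Y₀ → W (tau l) < w → w ∈ B l :=
    fun l w hw hlt => hBstar_l l w (key1' (tau l) w hw hlt)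
  -- extending a legal history by one legal move
  have legal_append : ∀ (L : List ℕ) (v : ℕ),
      (∀ n, n < L.length →
        (Even n → L.getD n 0 ∈ A (L.take n)) ∧ (¬ Even n → L.getD n 0 ∈ B (L.take n))) →
      (Even L.length → v ∈ A L) → (¬ Even L.length → v ∈ B L) →
      (∀ n, n < (L ++ [v]).length →
        (Even n → (L ++ [v]).getD n 0 ∈ A ((L ++ [v]).take n)) ∧
        (¬ Even n → (L ++ [v]).getD n 0 ∈ B ((L ++ [v]).take n))) := by
    intro L v hleg hvA hvB n hn
    simp only [List.length_append, List.length_singleton] at hn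
    rcases lt_or_ge n L.length with h | h
    · have ht : (L ++ [v]).take n = L.take n := List.take_append_of_le_length (le_of_lt h)
      have hg : (L ++ [v]).getD n 0 = L.getD n 0 := List.getD_append _ _ _ _ h
      rw [ht, hg]
      exact hleg n h
    · have hn' : n = L.length := by omega
      subst hn'
      have ht : (L ++ [v]).take L.length = L := List.take_left
      have hg : (L ++ [v]).getD L.length 0 = v := by
        rw [List.getD_eq_getElem _ _ (by simp),
          List.getElem_append_right (le_refl L.length)]
        simp
      rw [ht, hg]
      exact ⟨hvA, hvB⟩
  -- the fundamental invariant of the constructed run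
  have INV : ∀ j, ((s j).length ≤ 2*j ∧ j ≤ (s j).length ∧ (∀ v ∈ s j, v ≤ W (V j))) ∧
      (∀ n, n < (s j).length →
        (Even n → (s j).getD n 0 ∈ A ((s j).take n)) ∧
        (¬ Even n → (s j).getD n 0 ∈ B ((s j).take n))) := by
    intro j
    induction j with
    | zero =>
        refine ⟨⟨by rw [hs0]; simp, by rw [hs0]; simp, ?_⟩, ?_⟩
        · intro v hv; rw [hs0] at hv; simp at hv
        · intro n hn; rw [hs0] at hn; simp at hn
    | succ j ih =>
        obtain ⟨⟨hlen2, hlen1, hent⟩, hleg⟩ := ih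
        have hlenW : (s j).length ≤ W (V j) := by
          cases j with
          | zero => rw [hs0]; simp
          | succ j' =>
              have h1' : (s (j'+1)).length ≤ 2*(j'+1) := hlen2
              have h2' : j' ≤ z j' := hzge j'
              have h3' : 2 * (z j') + 4 ≤ W (z j') := hW_big _
              rw [hVS]
              omega
        have htauW : tau (s j) ≤ W (V j) := htau_le _ _ hent hlenW
        have hGV : G (V j) = W (W (W (V j))) := hG_eq _
        have l2 : W (W (V j)) ≤ W (W (W (V j))) := hW_mono (le_of_lt (hW_gt (W (V j))))
        have l1 : W (V j) ≤ W (W (V j)) := le_of_lt (hW_gt (W (V j)))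
        have hWt : W (tau (s j)) < z j := by
          have l0 : W (tau (s j)) ≤ W (W (V j)) := hW_mono htauW
          have l3 : G (V j) < z j := hVz j
          omega
        have hzX₀ : z j ∈ X → z j ∈ X₀ := fun h => hXX₀ _ h
        have hzY₀ : z j ∉ X → z j ∈ Y₀ := by
          intro h
          rcases hzmem j with h' | h'
          · exact absurd h' h
          · exact hYY₀ _ h'
        have hVj1 : V (j+1) = z j := hVS j
        by_cases hmatch : (Even (s j).length ↔ z j ∈ X)
        · -- parities agree: play z j directly
          have hzA : Even (s j).length → z j ∈ A (s j) :=
            fun hev => playA _ _ (hzX₀ (hmatch.1 hev)) hWt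
          have hzB : ¬ Even (s j).length → z j ∈ B (s j) :=
            fun hnev => playB _ _ (hzY₀ (fun hc => hnev (hmatch.2 hc))) hWt
          rw [hsS_pos j hmatch]
          refine ⟨⟨?_, ?_, ?_⟩, legal_append _ _ hleg hzA hzB⟩
          · simp only [List.length_append, List.length_singleton]; omega
          · simp only [List.length_append, List.length_singleton]; omega
          · intro v hv
            rw [hVj1]
            rcases List.mem_append.1 hv with hv | hv
            · exact le_trans (hent v hv) (hW_mono (hVle j))
            · have hveq : v = z j := by simpa using hv
              rw [hveq]
              exact le_of_lt (hW_gt (z j))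
        · -- parities disagree: insert a padding move, then play z j
          have hpadlegA : Even (s j).length → pad (s j) ∈ A (s j) := by
            intro hev
            rw [hpad_even _ hev]
            exact hAstar_l _ _ (key2 (tau (s j)))
          have hpadlegB : ¬ Even (s j).length → pad (s j) ∈ B (s j) := by
            intro hev
            rw [hpad_odd _ hev]
            exact hBstar_l _ _ (key2' (tau (s j)))
          have hpadle : pad (s j) ≤ W (W (V j)) := by
            by_cases hev : Even (s j).length
            · rw [hpad_even _ hev]
              exact le_trans (hW_e₁e₁ (tau (s j))) (hW_mono htauW)
            · rw [hpad_odd _ hev]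
              exact le_trans (hW_e₂e₂ (tau (s j))) (hW_mono htauW)
          have htauW' : tau (s j ++ [pad (s j)]) ≤ W (W (V j)) := by
            apply htau_le
            · intro v hv
              rcases List.mem_append.1 hv with hv | hv
              · exact le_trans (hent v hv) l1
              · have hveq : v = pad (s j) := by simpa using hv
                rw [hveq]
                exact hpadle
            · simp only [List.length_append, List.length_singleton]
              have := hW_gt (W (V j))
              omega
          have hWt' : W (tau (s j ++ [pad (s j)])) < z j := by
            have l0 : W (tau (s j ++ [pad (s j)])) ≤ W (W (W (V j))) := hW_mono htauW'
            have l3 : G (V j) < z j := hVz j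
            omega
          have hpar : Even (s j ++ [pad (s j)]).length ↔ z j ∈ X := by
            simp only [List.length_append, List.length_singleton, Nat.even_add_one]
            tauto
          have hzA' : Even (s j ++ [pad (s j)]).length → z j ∈ A (s j ++ [pad (s j)]) :=
            fun hev => playA _ _ (hzX₀ (hpar.1 hev)) hWt'
          have hzB' : ¬ Even (s j ++ [pad (s j)]).length → z j ∈ B (s j ++ [pad (s j)]) :=
            fun hnev => playB _ _ (hzY₀ (fun hc => hnev (hpar.2 hc))) hWt'
          have hsplit : s (j+1) = (s j ++ [pad (s j)]) ++ [z j] := by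
            rw [hsS_neg j hmatch]; simp
          rw [hsplit]
          refine ⟨⟨?_, ?_, ?_⟩,
            legal_append _ _ (legal_append _ _ hleg hpadlegA hpadlegB) hzA' hzB'⟩
          · simp only [List.length_append, List.length_singleton]; omega
          · simp only [List.length_append, List.length_singleton]; omega
          · intro v hv
            rw [hVj1]
            have hWz : W (V j) ≤ W (z j) := hW_mono (hVle j)
            have hGVz : G (V j) < z j := hVz j
            have hzW : z j < W (z j) := hW_gt _
            rcases List.mem_append.1 hv with hv | hv
            · rcases List.mem_append.1 hv with hv | hv
              · have := hent v hv; omega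
              · have hveq : v = pad (s j) := by simpa using hv
                rw [hveq]
                omega
            · have hveq : v = z j := by simpa using hv
              rw [hveq]
              omega
  -- each z j sits at a position of the right parity
  have RPOS : ∀ j, ∃ m, m < (s (j+1)).length ∧ (s (j+1)).getD m 0 = z j ∧
      (Even m ↔ z j ∈ X) := by
    intro j
    by_cases hmatch : (Even (s j).length ↔ z j ∈ X)
    · refine ⟨(s j).length, ?_, ?_, hmatch⟩
      · rw [hsS_pos j hmatch]; simp
      · rw [hsS_pos j hmatch]
        rw [List.getD_eq_getElem _ _ (by simp), List.getElem_append_right (le_refl _)]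
        simp
    · refine ⟨(s j).length + 1, ?_, ?_, ?_⟩
      · rw [hsS_neg j hmatch]; simp
      · rw [hsS_neg j hmatch]
        rw [List.getD_eq_getElem _ _ (by simp), List.getElem_append_right (by simp)]
        simp
      · rw [Nat.even_add_one]; tauto
  -- the histories are coherent
  have hpref : ∀ i j, i ≤ j → s i <+: s j := by
    intro i j hij
    induction j with
    | zero =>
        have hi0 : i = 0 := by omega
        rw [hi0]
    | succ j ihj =>
        rcases Nat.eq_or_lt_of_le hij with h | h
        · rw [h]
        · exact (ihj (by omega)).trans ⟨_, (hsS j).symm⟩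
  obtain ⟨k, hk_eq⟩ : ∃ k : ℕ → ℕ, ∀ n, k n = (s (n+1)).getD n 0 := ⟨_, fun n => rfl⟩
  have hk_len : ∀ n, n < (s (n+1)).length :=
    fun n => lt_of_lt_of_le (Nat.lt_succ_self n) (INV (n+1)).1.2.1
  have hk_get : ∀ j n, n < (s j).length → (s j).getD n 0 = k n := by
    intro j n hn
    rw [hk_eq]
    rcases le_total (n+1) j with h | h
    · have hp := hpref (n+1) j h
      rw [List.getD_eq_getElem _ _ hn, List.getD_eq_getElem _ _ (hk_len n)]
      exact (hp.getElem (hk_len n)).symm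
    · have hp := hpref j (n+1) h
      rw [List.getD_eq_getElem _ _ hn, List.getD_eq_getElem _ _ (hk_len n)]
      exact hp.getElem hn
  have htake : ∀ j n, n ≤ (s j).length → (List.range n).map k = (s j).take n := by
    intro j n hn
    apply List.ext_getElem
    · simp only [List.length_map, List.length_range, List.length_take]
      omega
    · intro i h1 h2
      simp only [List.getElem_map, List.getElem_range, List.getElem_take]
      have hi : i < (s j).length := by
        simp only [List.length_map, List.length_range] at h1
        omega
      rw [← List.getD_eq_getElem (s j) 0 hi]
      exact (hk_get j i hi).symm
  refine ⟨k, ?_, ?_, ?_⟩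
  · -- the rules are kept
    intro n
    have hlt : n < (s (n+1)).length := hk_len n
    have hleg := (INV (n+1)).2 n hlt
    have htk : (List.range n).map k = (s (n+1)).take n := htake (n+1) n (le_of_lt hlt)
    constructor
    · intro hev
      have hm := hleg.1 hev
      rw [hk_get (n+1) n hlt] at hm
      rw [htk, ← hA_eq]
      exact hm
    · intro hodd
      have hm := hleg.2 hodd
      rw [hk_get (n+1) n hlt] at hm
      rw [htk, ← hB_eq]
      exact hm
  · -- the even moves cover X
    refine Filter.mem_of_superset hX ?_
    intro x hx
    obtain ⟨j, hj⟩ := hzcover x (Or.inl hx)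
    obtain ⟨m, hm, hgd, hpar⟩ := RPOS j
    have hkm : k m = x := by
      rw [← hk_get (j+1) m hm, hgd, hj]
    have hxX : z j ∈ X := by rw [hj]; exact hx
    have hevm : Even m := hpar.2 hxX
    have hm2 : m % 2 = 0 := Nat.even_iff.1 hevm
    simp only [Set.mem_setOf_eq]
    refine ⟨m/2, ?_⟩
    rw [show 2*(m/2) = m by omega, hkm]
  · -- the odd moves cover Y
    refine Filter.mem_of_superset hY ?_
    intro x hx
    obtain ⟨j, hj⟩ := hzcover x (Or.inr hx)
    obtain ⟨m, hm, hgd, hpar⟩ := RPOS j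
    have hkm : k m = x := by
      rw [← hk_get (j+1) m hm, hgd, hj]
    have hxnX : ¬ (z j ∈ X) := by
      intro hc
      rw [hj] at hc
      exact hXYdisj x hc hx
    have hoddm : ¬ Even m := fun he => hxnX (hpar.1 he)
    have hm2 : m % 2 = 1 := Nat.not_even_iff.1 hoddm
    simp only [Set.mem_setOf_eq]
    refine ⟨m/2, ?_⟩
    rw [show 2*(m/2)+1 = m by omega, hkm]
end

section
/- Let ⟨a_k : k < ω⟩ be a partition of ℕ into pairwise disjoint sets with union ℕ, and let X ⊆ ℕ be such that X ∩ a_k is finite for every k. Let f : ℕ → ℕ be strictly increasing with f(0) = 0 and such that for all n and k, if a_k ∩ [0, f(n)) ≠ ∅ then X ∩ a_k ⊆ [0, f(n+1)). Let g : ℕ → ℕ be strictly increasing with g(0) = 0 and such that for every n the interval [g(n), g(n+1)) contains at least one element of the range of f. Fix i ∈ {0, 1, 2} and let Z be a subset of X ∩ ⋃_{n<ω} [g(3n+i), g(3n+i+1)) such that Z ∩ [g(n), g(n+1)) has at most one element for every n. Then Z ∩ a_k has at most one element for every k. -/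
open Set

/-- The combinatorial core of the proof of Lemma 1.1: given a partition
`⟨a k : k < ω⟩` of `ℕ`, a set `X` meeting every piece finitely, a strictly
increasing `f` capturing the pieces between consecutive values, a strictly
increasing `g` whose consecutive intervals each meet the range of `f`, and a set
`Z ⊆ X` contained in the blocks `[g(3n+i), g(3n+i+1))` of one residue class
`i ∈ {0,1,2}` and meeting each interval `[g(n), g(n+1))` at most once, the set
`Z` meets every piece `a k` in at most one point. -/
theorem selector_meets_pieces_once (a : ℕ → Set ℕ)
    (hdisj : ∀ k l : ℕ, k ≠ l → Disjoint (a k) (a l))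
    (hcover : (⋃ k, a k) = Set.univ)
    (X : Set ℕ) (hX : ∀ k, (X ∩ a k).Finite)
    (f : ℕ → ℕ) (hf : StrictMono f) (hf0 : f 0 = 0)
    (hfa : ∀ n k, (a k ∩ Set.Iio (f n)).Nonempty → X ∩ a k ⊆ Set.Iio (f (n + 1)))
    (g : ℕ → ℕ) (hg : StrictMono g) (hg0 : g 0 = 0)
    (hgf : ∀ n, ∃ m, f m ∈ Set.Ico (g n) (g (n + 1)))
    (i : ℕ) (hi : i ≤ 2)
    (Z : Set ℕ)
    (hZ : Z ⊆ X ∩ ⋃ n, Set.Ico (g (3 * n + i)) (g (3 * n + i + 1)))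
    (hZ1 : ∀ n, (Z ∩ Set.Ico (g n) (g (n + 1))).Subsingleton) :
    ∀ k, (Z ∩ a k).Subsingleton := by
  intro k x hx y hy
  by_contra hne
  obtain ⟨hxZ, hxk⟩ := hx
  obtain ⟨hyZ, hyk⟩ := hy
  obtain ⟨hxX, hxU⟩ := hZ hxZ
  obtain ⟨hyX, hyU⟩ := hZ hyZ
  simp only [Set.mem_iUnion] at hxU hyU
  obtain ⟨n, hxn⟩ := hxU
  obtain ⟨m, hym⟩ := hyU
  have key : ∀ n m x y : ℕ, x ∈ a k → y ∈ a k → y ∈ X →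
      x ∈ Set.Ico (g (3 * n + i)) (g (3 * n + i + 1)) →
      y ∈ Set.Ico (g (3 * m + i)) (g (3 * m + i + 1)) →
      n < m → False := by
    intro n m x y hxk hyk hyX hxn hym hnm
    obtain ⟨m1, hm1⟩ := hgf (3 * n + i + 1)
    obtain ⟨m2, hm2⟩ := hgf (3 * n + i + 1 + 1)
    have hm12 : m1 < m2 := hf.lt_iff_lt.mp (lt_of_lt_of_le hm1.2 hm2.1)
    have hxlt : x < f m1 := lt_of_lt_of_le hxn.2 hm1.1
    have hy1 : y ∈ Set.Iio (f (m1 + 1)) := hfa m1 k ⟨x, hxk, hxlt⟩ ⟨hyX, hyk⟩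
    have h1 : f (m1 + 1) ≤ f m2 := hf.le_iff_le.mpr hm12
    have h2 : f m2 < g (3 * n + i + 1 + 1 + 1) := hm2.2
    have h3 : g (3 * n + i + 1 + 1 + 1) ≤ g (3 * m + i) := hg.le_iff_le.mpr (by omega)
    have h4 : g (3 * m + i) ≤ y := hym.1
    simp only [Set.mem_Iio] at hy1
    omega
  rcases lt_trichotomy n m with h | h | h
  · exact key n m x y hxk hyk hyX hxn hym h
  · subst h
    exact hne (hZ1 (3 * n + i) ⟨hxZ, hxn⟩ ⟨hyZ, hym⟩)
  · exact key m n y x hyk hxk hxX hym hxn h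
end
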